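/- Let G be a pyramid-free graph containing an induced subgraph isomorphic to a net with vertices a1, a2, a3, v1, v2, v3 (triangle v1v2v3 and pendant edges a1v1, a2v2, a3v3). If some connected component of G minus (N(v1) ∪ N(v2) ∪ N(v3)) contains a neighbor of each of a1, a2, and a3, then G contains a long prism as an induced subgraph. -/

import Mathlib

open SimpleGraph

universe u v

section Defs

variable {V : Type u}

/-- An induced minor model of `H` in `G`. -/
def InducedMinorModel {W : Type v} (H : SimpleGraph W) (G : SimpleGraph V)
    (X : W → Set V) : Prop :=
  (∀ w, (X w).Nonempty) ∧ (∀ w, (G.induce (X w)).Connected) ∧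
  (Pairwise fun w w' => Disjoint (X w) (X w')) ∧
  (Pairwise fun w w' => ((∃ x ∈ X w, ∃ y ∈ X w', G.Adj x y) ↔ H.Adj w w'))

/-- `G` contains `H` as an induced minor. -/
def HasInducedMinor {W : Type v} (H : SimpleGraph W) (G : SimpleGraph V) : Prop :=
  ∃ X : W → Set V, InducedMinorModel H G X

/-- The complete bipartite graph `K_{2,3}`. -/
def K23 : SimpleGraph (Fin 2 ⊕ Fin 3) := completeBipartiteGraph (Fin 2) (Fin 3)

/-- `G` (as a whole graph) is a long prism. -/
def IsLongPrism (G : SimpleGraph V) : Prop :=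
  ∃ (a₁ a₂ a₃ b₁ b₂ b₃ : V) (P₁ : G.Walk a₁ b₁) (P₂ : G.Walk a₂ b₂) (P₃ : G.Walk a₃ b₃),
    P₁.IsPath ∧ P₂.IsPath ∧ P₃.IsPath ∧
    1 ≤ P₁.length ∧ 1 ≤ P₂.length ∧ 1 ≤ P₃.length ∧
    (2 ≤ P₁.length ∨ 2 ≤ P₂.length ∨ 2 ≤ P₃.length) ∧
    (∀ x : V, x ∈ P₁.support ∨ x ∈ P₂.support ∨ x ∈ P₃.support) ∧
    (∀ x : V, x ∈ P₁.support → x ∉ P₂.support) ∧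
    (∀ x : V, x ∈ P₁.support → x ∉ P₃.support) ∧
    (∀ x : V, x ∈ P₂.support → x ∉ P₃.support) ∧
    (∀ x y : V, G.Adj x y ↔ (s(x, y) ∈ P₁.edges ∨ s(x, y) ∈ P₂.edges ∨ s(x, y) ∈ P₃.edges ∨
      s(x, y) ∈ ({s(a₁, a₂), s(a₂, a₃), s(a₁, a₃), s(b₁, b₂), s(b₂, b₃), s(b₁, b₃)} :
        Set (Sym2 V))))

/-- `G` (as a whole graph) is a pyramid. -/
def IsPyramid (G : SimpleGraph V) : Prop :=
  ∃ (a b₁ b₂ b₃ : V) (P₁ : G.Walk a b₁) (P₂ : G.Walk a b₂) (P₃ : G.Walk a b₃),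
    P₁.IsPath ∧ P₂.IsPath ∧ P₃.IsPath ∧
    1 ≤ P₁.length ∧ 1 ≤ P₂.length ∧ 1 ≤ P₃.length ∧
    ((2 ≤ P₁.length ∧ 2 ≤ P₂.length) ∨ (2 ≤ P₁.length ∧ 2 ≤ P₃.length) ∨
      (2 ≤ P₂.length ∧ 2 ≤ P₃.length)) ∧
    (∀ x : V, x ∈ P₁.support ∨ x ∈ P₂.support ∨ x ∈ P₃.support) ∧
    (∀ x : V, x ∈ P₁.support → x ∈ P₂.support → x = a) ∧
    (∀ x : V, x ∈ P₁.support → x ∈ P₃.support → x = a) ∧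
    (∀ x : V, x ∈ P₂.support → x ∈ P₃.support → x = a) ∧
    (∀ x y : V, G.Adj x y ↔ (s(x, y) ∈ P₁.edges ∨ s(x, y) ∈ P₂.edges ∨ s(x, y) ∈ P₃.edges ∨
      s(x, y) ∈ ({s(b₁, b₂), s(b₂, b₃), s(b₁, b₃)} : Set (Sym2 V))))

/-- `G` (as a whole graph) is a theta. -/
def IsTheta (G : SimpleGraph V) : Prop :=
  ∃ (a b : V) (P₁ : G.Walk a b) (P₂ : G.Walk a b) (P₃ : G.Walk a b),
    P₁.IsPath ∧ P₂.IsPath ∧ P₃.IsPath ∧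
    2 ≤ P₁.length ∧ 2 ≤ P₂.length ∧ 2 ≤ P₃.length ∧
    (∀ x : V, x ∈ P₁.support ∨ x ∈ P₂.support ∨ x ∈ P₃.support) ∧
    (∀ x : V, x ∈ P₁.support → x ∈ P₂.support → x = a ∨ x = b) ∧
    (∀ x : V, x ∈ P₁.support → x ∈ P₃.support → x = a ∨ x = b) ∧
    (∀ x : V, x ∈ P₂.support → x ∈ P₃.support → x = a ∨ x = b) ∧
    (∀ x y : V, G.Adj x y ↔ (s(x, y) ∈ P₁.edges ∨ s(x, y) ∈ P₂.edges ∨ s(x, y) ∈ P₃.edges))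

/-- `G` (as a whole graph) is the cube. -/
def IsCube (G : SimpleGraph V) : Prop :=
  ∃ v₁ v₂ v₃ v₄ v₅ v₆ x y : V,
    [v₁, v₂, v₃, v₄, v₅, v₆, x, y].Nodup ∧
    (∀ u : V, u ∈ [v₁, v₂, v₃, v₄, v₅, v₆, x, y]) ∧
    (∀ u w : V, G.Adj u w ↔
      s(u, w) ∈ ({s(v₁, v₂), s(v₂, v₃), s(v₃, v₄), s(v₄, v₅), s(v₅, v₆), s(v₆, v₁),
        s(x, v₁), s(x, v₃), s(x, v₅), s(y, v₂), s(y, v₄), s(y, v₆)} : Set (Sym2 V)))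

/-- `Q` is a sector of the wheel with rim `C` and center `x`. -/
def IsSectorOf (G : SimpleGraph V) (x : V) {w : V} (C : G.Walk w w)
    {p q : V} (Q : G.Walk p q) : Prop :=
  Q.IsPath ∧ 1 ≤ Q.length ∧ (∀ e ∈ Q.edges, e ∈ C.edges) ∧ G.Adj x p ∧ G.Adj x q ∧
  (∀ u ∈ Q.support, u ≠ p → u ≠ q → ¬ G.Adj x u)

/-- The closed walk `C` together with the vertex `x` form a wheel in `G`,
i.e. `C` is a hole (a chordless cycle of length at least 4) and `x` has at least
three neighbors on `C`. -/
def IsWheelWith (G : SimpleGraph V) (x : V) {w : V} (C : G.Walk w w) : Prop :=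
  C.IsCycle ∧ 4 ≤ C.length ∧ x ∉ C.support ∧
  (∀ y z : V, y ∈ C.support → z ∈ C.support → (G.Adj y z ↔ s(y, z) ∈ C.edges)) ∧
  (∃ n₁ n₂ n₃ : V, n₁ ∈ C.support ∧ n₂ ∈ C.support ∧ n₃ ∈ C.support ∧
    n₁ ≠ n₂ ∧ n₁ ≠ n₃ ∧ n₂ ≠ n₃ ∧ G.Adj x n₁ ∧ G.Adj x n₂ ∧ G.Adj x n₃)

/-- `G` (as a whole graph) is a broken wheel: a wheel at least two of whose
sectors have length at least 2. -/
def IsBrokenWheel (G : SimpleGraph V) : Prop :=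
  ∃ (x w : V) (C : G.Walk w w), IsWheelWith G x C ∧
    (∀ u : V, u = x ∨ u ∈ C.support) ∧
    ∃ (p₁ q₁ p₂ q₂ : V) (Q₁ : G.Walk p₁ q₁) (Q₂ : G.Walk p₂ q₂),
      IsSectorOf G x C Q₁ ∧ IsSectorOf G x C Q₂ ∧
      2 ≤ Q₁.length ∧ 2 ≤ Q₂.length ∧ (∀ e ∈ Q₁.edges, e ∉ Q₂.edges)

/-- `G` (as a whole graph) belongs to the class `S` (subdivisions of `K_{1,3}`),
with extremities `e₁`, `e₂`, `e₃`. -/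
def IsS (G : SimpleGraph V) (e₁ e₂ e₃ : V) : Prop :=
  ∃ (u : V) (P₁ : G.Walk u e₁) (P₂ : G.Walk u e₂) (P₃ : G.Walk u e₃),
    P₁.IsPath ∧ P₂.IsPath ∧ P₃.IsPath ∧
    1 ≤ P₁.length ∧ 1 ≤ P₂.length ∧ 1 ≤ P₃.length ∧
    (∀ x : V, x ∈ P₁.support ∨ x ∈ P₂.support ∨ x ∈ P₃.support) ∧
    (∀ x : V, x ∈ P₁.support → x ∈ P₂.support → x = u) ∧
    (∀ x : V, x ∈ P₁.support → x ∈ P₃.support → x = u) ∧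
    (∀ x : V, x ∈ P₂.support → x ∈ P₃.support → x = u) ∧
    (∀ x y : V, G.Adj x y ↔ (s(x, y) ∈ P₁.edges ∨ s(x, y) ∈ P₂.edges ∨ s(x, y) ∈ P₃.edges))

/-- `G` (as a whole graph) belongs to the class `T`, with extremities `e₁`, `e₂`, `e₃`. -/
def IsT (G : SimpleGraph V) (e₁ e₂ e₃ : V) : Prop :=
  ∃ (t₁ t₂ t₃ : V) (P₁ : G.Walk t₁ e₁) (P₂ : G.Walk t₂ e₂) (P₃ : G.Walk t₃ e₃),
    P₁.IsPath ∧ P₂.IsPath ∧ P₃.IsPath ∧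
    1 ≤ P₁.length ∧ 1 ≤ P₂.length ∧ 1 ≤ P₃.length ∧
    (∀ x : V, x ∈ P₁.support ∨ x ∈ P₂.support ∨ x ∈ P₃.support) ∧
    (∀ x : V, x ∈ P₁.support → x ∉ P₂.support) ∧
    (∀ x : V, x ∈ P₁.support → x ∉ P₃.support) ∧
    (∀ x : V, x ∈ P₂.support → x ∉ P₃.support) ∧
    (∀ x y : V, G.Adj x y ↔ (s(x, y) ∈ P₁.edges ∨ s(x, y) ∈ P₂.edges ∨ s(x, y) ∈ P₃.edges ∨
      s(x, y) ∈ ({s(t₁, t₂), s(t₂, t₃), s(t₁, t₃)} : Set (Sym2 V))))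

/-- `G` (as a whole graph) belongs to the class `M`, with extremities the two
endpoints `e₁`, `e₂` of the path and the center `e₃`. -/
def IsM (G : SimpleGraph V) (e₁ e₂ e₃ : V) : Prop :=
  ∃ P : G.Walk e₁ e₂,
    P.IsPath ∧ e₃ ∉ P.support ∧
    (∀ x : V, x = e₃ ∨ x ∈ P.support) ∧
    (∀ x y : V, x ∈ P.support → y ∈ P.support → (G.Adj x y ↔ s(x, y) ∈ P.edges)) ∧
    ¬ G.Adj e₃ e₁ ∧ ¬ G.Adj e₃ e₂ ∧
    (∃ u w : V, u ∈ P.support ∧ w ∈ P.support ∧ u ≠ w ∧ G.Adj e₃ u ∧ G.Adj e₃ w)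

/-- `G` belongs to `S ∪ T ∪ M` and its set of extremities is exactly `I`. -/
def IsSTMwithExtremities (G : SimpleGraph V) (I : Set V) : Prop :=
  ∃ e₁ e₂ e₃ : V, I = {e₁, e₂, e₃} ∧
    (IsS G e₁ e₂ e₃ ∨ IsT G e₁ e₂ e₃ ∨ IsM G e₁ e₂ e₃)

/-- The interior of a path (its support minus the two endpoints). -/
def walkInterior {G : SimpleGraph V} {p q : V} (W : G.Walk p q) : Set V :=
  {v | v ∈ W.support ∧ v ≠ p ∧ v ≠ q}

/-- A broken wheel in `G` together with a frame: the rim is the concatenation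
`P ++ Q ++ R ++ S` where `P = a…b` and `R = c…d` are sectors of length at least 2
(`a`, `b`, `c`, `d` in clockwise order). -/
structure BWFrame (G : SimpleGraph V) where
  x : V
  a : V
  b : V
  c : V
  d : V
  P : G.Walk a b
  Q : G.Walk b c
  R : G.Walk c d
  S : G.Walk d a
  hP : 2 ≤ P.length
  hR : 2 ≤ R.length
  nondeg : ¬ (b = c ∧ d = a)
  cyc : (((P.append Q).append R).append S).IsCycle
  len4 : 4 ≤ (((P.append Q).append R).append S).length
  hx : x ∉ (((P.append Q).append R).append S).support
  chordless : ∀ y z : V, y ∈ (((P.append Q).append R).append S).support →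
    z ∈ (((P.append Q).append R).append S).support →
    (G.Adj y z ↔ s(y, z) ∈ (((P.append Q).append R).append S).edges)
  adja : G.Adj x a
  adjb : G.Adj x b
  adjc : G.Adj x c
  adjd : G.Adj x d
  secP : ∀ u ∈ P.support, u ≠ a → u ≠ b → ¬ G.Adj x u
  secR : ∀ u ∈ R.support, u ≠ c → u ≠ d → ¬ G.Adj x u

/-- The rim of a framed broken wheel. -/
def BWFrame.rim {G : SimpleGraph V} (F : BWFrame G) : G.Walk F.a F.a :=
  ((F.P.append F.Q).append F.R).append F.S

/-- The vertex set of a framed broken wheel. -/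
def BWFrame.verts {G : SimpleGraph V} (F : BWFrame G) : Set V :=
  insert F.x {v | v ∈ F.rim.support}

/-- Optimality of a framed broken wheel `(W, F)`: no broken wheel of `G` has fewer
vertices, and subject to that the sum of the lengths of `Q` and `S` is minimal. -/
def BWFrame.Optimal {G : SimpleGraph V} (F : BWFrame G) : Prop :=
  (∀ T : Set V, IsBrokenWheel (G.induce T) → F.verts.ncard ≤ T.ncard) ∧
  (∀ F' : BWFrame G, F'.verts.ncard = F.verts.ncard →
    F.Q.length + F.S.length ≤ F'.Q.length + F'.S.length)

/-- `S` separates `u` and `v` in `G`: both avoid `S` and every walk between them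
meets `S`. -/
def Separates (G : SimpleGraph V) (S : Set V) (u v : V) : Prop :=
  u ∉ S ∧ v ∉ S ∧ ∀ p : G.Walk u v, ∃ w ∈ p.support, w ∈ S

/-- `S` is a minimal separator of `G`: a minimal `u,v`-separator for some `u`, `v`. -/
def IsMinimalSeparator (G : SimpleGraph V) (S : Set V) : Prop :=
  ∃ u v : V, Separates G S u v ∧ ∀ T ⊆ S, Separates G T u v → T = S

/-- `A` is an independent set of `G`. -/
def IsIndepSet (G : SimpleGraph V) (A : Set V) : Prop :=
  ∀ x ∈ A, ∀ y ∈ A, x ≠ y → ¬ G.Adj x y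

end Defs

namespace StmtAux

open SimpleGraph Walk

variable {V : Type u} {G : SimpleGraph V}

/-- getVert is in the support. -/
lemma getVert_mem_support {a b : V} (p : G.Walk a b) {i : ℕ} (hi : i ≤ p.length) :
    p.getVert i ∈ p.support :=
  Walk.mem_support_iff_exists_getVert.mpr ⟨i, rfl, hi⟩

/-- getVert is injective on paths. -/
lemma getVert_inj {a b : V} {p : G.Walk a b} (hp : p.IsPath) :
    ∀ {i j : ℕ}, i ≤ p.length → j ≤ p.length → p.getVert i = p.getVert j → i = j := by
  induction p with
  | nil => intro i j hi hj _; simp only [Walk.length_nil, Nat.le_zero] at hi hj; omega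
  | cons h q ih =>
    intro i j hi hj hij
    rw [Walk.cons_isPath_iff] at hp
    match i, j with
    | 0, 0 => rfl
    | 0, j+1 =>
      exfalso
      rw [Walk.getVert_zero, Walk.getVert_cons_succ] at hij
      exact hp.2 (hij ▸ getVert_mem_support q (by simpa using hj))
    | i+1, 0 =>
      exfalso
      rw [Walk.getVert_zero, Walk.getVert_cons_succ] at hij
      exact hp.2 (hij ▸ getVert_mem_support q (by simpa using hi))
    | i+1, j+1 =>
      rw [Walk.getVert_cons_succ, Walk.getVert_cons_succ] at hij
      have := ih hp.1 (by simpa using hi) (by simpa using hj) hij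
      omega

/-- consecutive getVerts give an edge of the walk. -/
lemma edge_getVert_succ {a b : V} (p : G.Walk a b) {i : ℕ} (hi : i < p.length) :
    s(p.getVert i, p.getVert (i+1)) ∈ p.edges := by
  induction p generalizing i with
  | nil => simp at hi
  | cons h q ih =>
    match i with
    | 0 =>
      rw [Walk.getVert_zero, Walk.getVert_cons_succ, Walk.getVert_zero]
      simp
    | i+1 =>
      rw [Walk.getVert_cons_succ, Walk.getVert_cons_succ]
      exact List.mem_cons_of_mem _ (ih (by simpa using hi))

/-- an edge of a walk appears as a consecutive pair. -/
lemma edge_index {a b : V} (p : G.Walk a b) {y z : V} (he : s(y, z) ∈ p.edges) :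
    ∃ i, i < p.length ∧ ((p.getVert i = y ∧ p.getVert (i+1) = z) ∨
      (p.getVert i = z ∧ p.getVert (i+1) = y)) := by
  induction p with
  | nil => simp at he
  | cons h q ih =>
    rw [Walk.edges_cons, List.mem_cons] at he
    rcases he with he | he
    · refine ⟨0, by simp, ?_⟩
      rw [Sym2.eq_iff] at he
      rcases he with ⟨rfl, rfl⟩ | ⟨rfl, rfl⟩
      · left; constructor
        · exact Walk.getVert_zero _
        · rw [Walk.getVert_cons_succ, Walk.getVert_zero]
      · right; constructor
        · exact Walk.getVert_zero _
        · rw [Walk.getVert_cons_succ, Walk.getVert_zero]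
    · obtain ⟨i, hi, hor⟩ := ih he
      refine ⟨i + 1, by simpa using hi, ?_⟩
      rw [Walk.getVert_cons_succ, Walk.getVert_cons_succ]
      exact hor

/-- a path of positive length has distinct endpoints. -/
lemma ends_ne {a : V} {p : G.Walk a a} (hp : p.IsPath) : p.length = 0 := by
  cases p with
  | nil => rfl
  | cons h q =>
    exfalso
    rw [Walk.cons_isPath_iff] at hp
    exact hp.2 q.end_mem_support


section TakeDrop
variable [DecidableEq V] {a b : V} (p : G.Walk a b) {u : V} (h : u ∈ p.support)

lemma length_take_add : (p.takeUntil u h).length + (p.dropUntil u h).length = p.length := by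
  conv_rhs => rw [← p.take_spec h]
  rw [Walk.length_append]

lemma getVert_take_length : p.getVert (p.takeUntil u h).length = u := by
  have key := Walk.getVert_append (p.takeUntil u h) (p.dropUntil u h) (p.takeUntil u h).length
  rw [p.take_spec h] at key
  simpa using key

lemma getVert_drop (k : ℕ) :
    p.getVert ((p.takeUntil u h).length + k) = (p.dropUntil u h).getVert k := by
  have key := Walk.getVert_append (p.takeUntil u h) (p.dropUntil u h) ((p.takeUntil u h).length + k)
  rw [p.take_spec h] at key
  rw [key, if_neg (by omega)]
  congr 1
  omega

lemma getVert_take {j : ℕ} (hj : j ≤ (p.takeUntil u h).length) :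
    p.getVert j = (p.takeUntil u h).getVert j := by
  rcases Nat.lt_or_ge j (p.takeUntil u h).length with h' | h'
  · have key := Walk.getVert_append (p.takeUntil u h) (p.dropUntil u h) j
    rw [p.take_spec h] at key
    rw [key, if_pos h']
  · have hj' : j = (p.takeUntil u h).length := le_antisymm hj h'
    rw [hj', getVert_take_length, Walk.getVert_length]

/-- members of the two pieces of a path meet only at the split vertex. -/
lemma mem_take_drop {y : V} (hp : p.IsPath)
    (h1 : y ∈ (p.takeUntil u h).support) (h2 : y ∈ (p.dropUntil u h).support) : y = u := by
  have hs : p.support = (p.takeUntil u h).support ++ (p.dropUntil u h).support.tail := by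
    conv_lhs => rw [← p.take_spec h]
    rw [Walk.support_append]
  have hnd := hp.support_nodup
  rw [hs, List.nodup_append] at hnd
  rcases List.mem_cons.mp ((Walk.support_eq_cons (p.dropUntil u h)) ▸ h2) with h2' | h2'
  · exact h2'
  · exact absurd rfl (hnd.2.2 _ h1 _ h2')

end TakeDrop

/-- edge of an appended path with both endpoints in the left part lies in the left part. -/
lemma edge_mem_left {a b c : V} {q : G.Walk a b} {r : G.Walk b c}
    (hp : (q.append r).IsPath) {y z : V} (he : s(y, z) ∈ (q.append r).edges)
    (hy : y ∈ q.support) (hz : z ∈ q.support) : s(y, z) ∈ q.edges := by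
  rw [Walk.edges_append, List.mem_append] at he
  rcases he with he | he
  · exact he
  · exfalso
    have hy' : y ∈ r.support := r.fst_mem_support_of_mem_edges he
    have hz' : z ∈ r.support := r.snd_mem_support_of_mem_edges he
    have hs : (q.append r).support = q.support ++ r.support.tail :=
      Walk.support_append _ _
    have hnd := hp.support_nodup
    rw [hs, List.nodup_append] at hnd
    have hyb : y = b := by
      rcases List.mem_cons.mp ((Walk.support_eq_cons r) ▸ hy') with h' | h'
      · exact h'
      · exact absurd rfl (hnd.2.2 _ hy _ h')
    have hzb : z = b := by
      rcases List.mem_cons.mp ((Walk.support_eq_cons r) ▸ hz') with h' | h'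
      · exact h'
      · exact absurd rfl (hnd.2.2 _ hz _ h')
    have : G.Adj y z := (q.append r).adj_of_mem_edges (by rw [Walk.edges_append]; exact List.mem_append.mpr (Or.inr he))
    rw [hyb, hzb] at this
    exact G.loopless.irrefl b this

lemma edge_mem_right {a b c : V} {q : G.Walk a b} {r : G.Walk b c}
    (hp : (q.append r).IsPath) {y z : V} (he : s(y, z) ∈ (q.append r).edges)
    (hy : y ∈ r.support) (hz : z ∈ r.support) : s(y, z) ∈ r.edges := by
  rw [Walk.edges_append, List.mem_append] at he
  rcases he with he | he
  · exfalso
    have hy' : y ∈ q.support := q.fst_mem_support_of_mem_edges he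
    have hz' : z ∈ q.support := q.snd_mem_support_of_mem_edges he
    have hs : (q.append r).support = q.support ++ r.support.tail :=
      Walk.support_append _ _
    have hnd := hp.support_nodup
    rw [hs, List.nodup_append] at hnd
    have hyb : y = b := by
      rcases List.mem_cons.mp ((Walk.support_eq_cons r) ▸ hy) with h' | h'
      · exact h'
      · exact absurd rfl (hnd.2.2 _ hy' _ h')
    have hzb : z = b := by
      rcases List.mem_cons.mp ((Walk.support_eq_cons r) ▸ hz) with h' | h'
      · exact h'
      · exact absurd rfl (hnd.2.2 _ hz' _ h')
    have : G.Adj y z := q.adj_of_mem_edges he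
    rw [hyb, hzb] at this
    exact G.loopless.irrefl b this
  · exact he


/-- `p` is an induced (chordless) path: every edge of `G` between support vertices is a walk edge. -/
def Chordless {a b : V} (p : G.Walk a b) : Prop :=
  ∀ y z : V, y ∈ p.support → z ∈ p.support → G.Adj y z → s(y, z) ∈ p.edges

lemma exists_min_path [DecidableEq V] (S : Set V) {a b : V}
    (hex : ∃ p : G.Walk a b, ∀ v ∈ p.support, v ∈ S) :
    ∃ p : G.Walk a b, (∀ v ∈ p.support, v ∈ S) ∧ p.IsPath ∧ Chordless p ∧
      ∀ q : G.Walk a b, (∀ v ∈ q.support, v ∈ S) → p.length ≤ q.length := by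
  classical
  set Pn : ℕ → Prop := fun n => ∃ p : G.Walk a b, p.length = n ∧ ∀ v ∈ p.support, v ∈ S with hPn
  have hex' : ∃ n, Pn n := by
    obtain ⟨p, hp⟩ := hex
    exact ⟨p.length, p, rfl, hp⟩
  obtain ⟨p0, hp0len, hp0S⟩ := Nat.find_spec hex'
  set p := p0.bypass with hp
  have hpS : ∀ v ∈ p.support, v ∈ S := fun v hv => hp0S v (p0.support_bypass_subset hv)
  have hppath : p.IsPath := p0.bypass_isPath
  have hmin : ∀ q : G.Walk a b, (∀ v ∈ q.support, v ∈ S) → p.length ≤ q.length := by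
    intro q hq
    have h1 : p.length ≤ Nat.find hex' := hp0len ▸ p0.length_bypass_le
    have h2 : Nat.find hex' ≤ q.length := Nat.find_min' hex' ⟨q, rfl, hq⟩
    omega
  refine ⟨p, hpS, hppath, ?_, hmin⟩
  have claim : ∀ y z : V, (hy : y ∈ p.support) → (hz : z ∈ p.support) → G.Adj y z →
      (p.takeUntil y hy).length < (p.takeUntil z hz).length → s(y, z) ∈ p.edges := by
    intro y z hy hz hadj hlt
    set jy := (p.takeUntil y hy).length
    set jz := (p.takeUntil z hz).length
    have hq : ∀ v ∈ ((p.takeUntil y hy).append (Walk.cons hadj (p.dropUntil z hz))).support,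
        v ∈ S := by
      intro v hv
      rw [Walk.mem_support_append_iff] at hv
      rcases hv with hv | hv
      · exact hpS v (p.support_takeUntil_subset hy hv)
      · rw [Walk.support_cons, List.mem_cons] at hv
        rcases hv with rfl | hv
        · exact hpS v hy
        · exact hpS v (p.support_dropUntil_subset hz hv)
    have hlen := hmin _ hq
    rw [Walk.length_append, Walk.length_cons] at hlen
    have hplen : jz + (p.dropUntil z hz).length = p.length := length_take_add p hz
    have hjz : jz = jy + 1 := by omega
    have hjylt : jy < p.length := by
      have := p.length_takeUntil_le hz
      omega
    have := edge_getVert_succ p hjylt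
    rwa [getVert_take_length p hy, ← hjz, getVert_take_length p hz] at this
  intro y z hy hz hadj
  rcases lt_trichotomy (p.takeUntil y hy).length (p.takeUntil z hz).length with hlt | heq | hgt
  · exact claim y z hy hz hadj hlt
  · exfalso
    have h1 := getVert_take_length p hy
    have h2 := getVert_take_length p hz
    rw [heq, h2] at h1
    exact hadj.ne h1.symm
  · rw [Sym2.eq_swap]
    exact claim z y hz hy hadj.symm hgt

/-- Lift a walk with support in `T` to the induced subgraph on `T`. -/
lemma exists_lift {T : Set V} : ∀ {a b : V} (p : G.Walk a b)
    (hs : ∀ v ∈ p.support, v ∈ T) (ha : a ∈ T) (hb : b ∈ T),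
    ∃ q : (G.induce T).Walk ⟨a, ha⟩ ⟨b, hb⟩, q.map (Embedding.induce T).toHom = p := by
  intro a b p
  induction p with
  | nil => intro hs ha hb; exact ⟨Walk.nil, rfl⟩
  | @cons a c b h q ih =>
    intro hs ha hb
    have hc : c ∈ T := hs c (by simp)
    obtain ⟨q', hq'⟩ := ih (fun v hv => hs v (by simp [hv])) hc hb
    refine ⟨Walk.cons (by simpa using h : (G.induce T).Adj ⟨a, ha⟩ ⟨c, hc⟩) q', ?_⟩
    rw [Walk.map_cons, hq']
    rfl

section Lift
variable {T : Set V} {a b : T} (q : (G.induce T).Walk a b)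

lemma lift_support_mem {x : T} :
    x ∈ q.support ↔ (x : V) ∈ (q.map (Embedding.induce T).toHom).support := by
  rw [Walk.support_map]
  constructor
  · exact fun h => List.mem_map_of_mem h
  · intro h
    obtain ⟨y, hy, he⟩ := List.mem_map.mp h
    exact (Subtype.ext he : y = x) ▸ hy

lemma lift_edges_mem {x y : T} :
    s(x, y) ∈ q.edges ↔ s((x : V), (y : V)) ∈ (q.map (Embedding.induce T).toHom).edges := by
  rw [Walk.edges_map, ← Sym2.map_pair_eq]
  exact (List.mem_map_of_injective (Sym2.map.injective Subtype.val_injective)).symm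

end Lift


lemma chordless_takeUntil [DecidableEq V] {a b u : V} {p : G.Walk a b} (hp : p.IsPath)
    (hch : Chordless p) (hu : u ∈ p.support) : Chordless (p.takeUntil u hu) := by
  intro y z hy hz hadj
  have hyp := p.support_takeUntil_subset hu hy
  have hzp := p.support_takeUntil_subset hu hz
  have he := hch y z hyp hzp hadj
  have hp' : ((p.takeUntil u hu).append (p.dropUntil u hu)).IsPath := by
    rw [p.take_spec hu]; exact hp
  have he' : s(y, z) ∈ ((p.takeUntil u hu).append (p.dropUntil u hu)).edges := by
    rw [p.take_spec hu]; exact he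
  exact edge_mem_left hp' he' hy hz

lemma chordless_dropUntil [DecidableEq V] {a b u : V} {p : G.Walk a b} (hp : p.IsPath)
    (hch : Chordless p) (hu : u ∈ p.support) : Chordless (p.dropUntil u hu) := by
  intro y z hy hz hadj
  have hyp := p.support_dropUntil_subset hu hy
  have hzp := p.support_dropUntil_subset hu hz
  have he := hch y z hyp hzp hadj
  have hp' : ((p.takeUntil u hu).append (p.dropUntil u hu)).IsPath := by
    rw [p.take_spec hu]; exact hp
  have he' : s(y, z) ∈ ((p.takeUntil u hu).append (p.dropUntil u hu)).edges := by
    rw [p.take_spec hu]; exact he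
  exact edge_mem_right hp' he' hy hz

lemma chordless_reverse {a b : V} {p : G.Walk a b} (h : Chordless p) : Chordless p.reverse := by
  intro y z hy hz hadj
  rw [Walk.support_reverse, List.mem_reverse] at hy hz
  rw [Walk.edges_reverse, List.mem_reverse]
  exact h y z hy hz hadj

/-- appending a pendant edge at the end preserves paths. -/
lemma isPath_concat {c d e : V} {p : G.Walk c d} (hp : p.IsPath) (h : G.Adj d e)
    (he : e ∉ p.support) : (p.concat h).IsPath := by
  rw [Walk.isPath_def, Walk.support_concat]
  rw [Walk.isPath_def] at hp
  rw [List.nodup_append]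
  refine ⟨hp, List.nodup_singleton e, ?_⟩
  intro a ha b hb
  rw [List.mem_singleton] at hb
  subst hb
  rintro rfl
  exact he ha

lemma mem_support_concat {c d e : V} {p : G.Walk c d} (h : G.Adj d e) {y : V} :
    y ∈ (p.concat h).support ↔ y ∈ p.support ∨ y = e := by
  rw [Walk.support_concat, List.mem_append]
  simp

lemma chordless_concat {c d e : V} {p : G.Walk c d} (hch : Chordless p) (h : G.Adj d e)
    (he : ∀ y ∈ p.support, G.Adj e y → y = d) :
    Chordless (p.concat h) := by
  intro y z hy hz hadj
  rw [mem_support_concat] at hy hz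
  rw [Walk.edges_concat, List.concat_eq_append, List.mem_append]
  rcases hy with hy | rfl <;> rcases hz with hz | rfl
  · exact Or.inl (hch y z hy hz hadj)
  · have : y = d := he y hy hadj.symm
    subst this
    simp
  · have : z = d := he z hz hadj
    subst this
    rw [Sym2.eq_swap]
    simp
  · exact absurd hadj (G.loopless.irrefl _)

lemma chordless_cons {c d e : V} {p : G.Walk c d} (hch : Chordless p) (h : G.Adj e c)
    (he : ∀ y ∈ p.support, G.Adj e y → y = c) :
    Chordless (Walk.cons h p) := by
  intro y z hy hz hadj
  rw [Walk.support_cons, List.mem_cons] at hy hz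
  rw [Walk.edges_cons, List.mem_cons]
  rcases hy with rfl | hy <;> rcases hz with rfl | hz
  · exact absurd hadj (G.loopless.irrefl _)
  · have : z = c := he z hz hadj
    subst this
    simp
  · have : y = c := he y hy hadj.symm
    subst this
    rw [Sym2.eq_swap]
    simp
  · exact Or.inr (hch y z hy hz hadj)


lemma pyramid_of_walks {a b1 b2 b3 : V}
    (W1 : G.Walk a b1) (W2 : G.Walk a b2) (W3 : G.Walk a b3)
    (h1 : W1.IsPath) (h2 : W2.IsPath) (h3 : W3.IsPath)
    (l1 : 1 ≤ W1.length) (l2 : 1 ≤ W2.length) (l3 : 1 ≤ W3.length)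
    (llong : (2 ≤ W1.length ∧ 2 ≤ W2.length) ∨ (2 ≤ W1.length ∧ 2 ≤ W3.length) ∨
      (2 ≤ W2.length ∧ 2 ≤ W3.length))
    (m12 : ∀ y, y ∈ W1.support → y ∈ W2.support → y = a)
    (m13 : ∀ y, y ∈ W1.support → y ∈ W3.support → y = a)
    (m23 : ∀ y, y ∈ W2.support → y ∈ W3.support → y = a)
    (tb12 : G.Adj b1 b2) (tb23 : G.Adj b2 b3) (tb13 : G.Adj b1 b3)
    (ch1 : Chordless W1) (ch2 : Chordless W2) (ch3 : Chordless W3)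
    (cr12 : ∀ y z, y ∈ W1.support → z ∈ W2.support → G.Adj y z →
        s(y, z) ∈ W1.edges ∨ s(y, z) ∈ W2.edges ∨ (y = b1 ∧ z = b2))
    (cr13 : ∀ y z, y ∈ W1.support → z ∈ W3.support → G.Adj y z →
        s(y, z) ∈ W1.edges ∨ s(y, z) ∈ W3.edges ∨ (y = b1 ∧ z = b3))
    (cr23 : ∀ y z, y ∈ W2.support → z ∈ W3.support → G.Adj y z →
        s(y, z) ∈ W2.edges ∨ s(y, z) ∈ W3.edges ∨ (y = b2 ∧ z = b3)) :
    IsPyramid (G.induce {v | v ∈ W1.support ∨ v ∈ W2.support ∨ v ∈ W3.support}) := by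
  set T : Set V := {v | v ∈ W1.support ∨ v ∈ W2.support ∨ v ∈ W3.support} with hT
  have hT1 : ∀ v ∈ W1.support, v ∈ T := fun v hv => Or.inl hv
  have hT2 : ∀ v ∈ W2.support, v ∈ T := fun v hv => Or.inr (Or.inl hv)
  have hT3 : ∀ v ∈ W3.support, v ∈ T := fun v hv => Or.inr (Or.inr hv)
  have ha : a ∈ T := hT1 _ W1.start_mem_support
  have hb1 : b1 ∈ T := hT1 _ W1.end_mem_support
  have hb2 : b2 ∈ T := hT2 _ W2.end_mem_support
  have hb3 : b3 ∈ T := hT3 _ W3.end_mem_support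
  obtain ⟨q1, hq1⟩ := exists_lift W1 hT1 ha hb1
  obtain ⟨q2, hq2⟩ := exists_lift W2 hT2 ha hb2
  obtain ⟨q3, hq3⟩ := exists_lift W3 hT3 ha hb3
  have hs1 : ∀ x : T, x ∈ q1.support ↔ (x : V) ∈ W1.support := by
    intro x; rw [lift_support_mem q1, hq1]; exact Iff.rfl
  have hs2 : ∀ x : T, x ∈ q2.support ↔ (x : V) ∈ W2.support := by
    intro x; rw [lift_support_mem q2, hq2]; exact Iff.rfl
  have hs3 : ∀ x : T, x ∈ q3.support ↔ (x : V) ∈ W3.support := by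
    intro x; rw [lift_support_mem q3, hq3]; exact Iff.rfl
  have he1 : ∀ x y : T, s(x, y) ∈ q1.edges ↔ s((x : V), (y : V)) ∈ W1.edges := by
    intro x y; rw [lift_edges_mem q1, hq1]; exact Iff.rfl
  have he2 : ∀ x y : T, s(x, y) ∈ q2.edges ↔ s((x : V), (y : V)) ∈ W2.edges := by
    intro x y; rw [lift_edges_mem q2, hq2]; exact Iff.rfl
  have he3 : ∀ x y : T, s(x, y) ∈ q3.edges ↔ s((x : V), (y : V)) ∈ W3.edges := by
    intro x y; rw [lift_edges_mem q3, hq3]; exact Iff.rfl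
  have hl1 : q1.length = W1.length := (Walk.length_map (Embedding.induce T).toHom q1).symm.trans (congrArg Walk.length hq1)
  have hl2 : q2.length = W2.length := (Walk.length_map (Embedding.induce T).toHom q2).symm.trans (congrArg Walk.length hq2)
  have hl3 : q3.length = W3.length := (Walk.length_map (Embedding.induce T).toHom q3).symm.trans (congrArg Walk.length hq3)
  refine ⟨⟨a, ha⟩, ⟨b1, hb1⟩, ⟨b2, hb2⟩, ⟨b3, hb3⟩, q1, q2, q3,
    Walk.IsPath.of_map (f := (Embedding.induce T).toHom) (hq1.symm ▸ h1),
    Walk.IsPath.of_map (f := (Embedding.induce T).toHom) (hq2.symm ▸ h2),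
    Walk.IsPath.of_map (f := (Embedding.induce T).toHom) (hq3.symm ▸ h3),
    by omega, by omega, by omega, by omega, ?_, ?_, ?_, ?_, ?_⟩
  · intro x
    rcases x.2 with hx | hx | hx
    · exact Or.inl ((hs1 x).mpr hx)
    · exact Or.inr (Or.inl ((hs2 x).mpr hx))
    · exact Or.inr (Or.inr ((hs3 x).mpr hx))
  · intro x hx1 hx2
    exact Subtype.ext (m12 _ ((hs1 x).mp hx1) ((hs2 x).mp hx2))
  · intro x hx1 hx3
    exact Subtype.ext (m13 _ ((hs1 x).mp hx1) ((hs3 x).mp hx3))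
  · intro x hx2 hx3
    exact Subtype.ext (m23 _ ((hs2 x).mp hx2) ((hs3 x).mp hx3))
  · intro x y
    constructor
    · intro hadj
      have hadj' : G.Adj (x : V) (y : V) := hadj
      have hx := x.2
      have hy := y.2
      rcases hx with hx | hx | hx <;> rcases hy with hy | hy | hy
      · exact Or.inl ((he1 x y).mpr (ch1 _ _ hx hy hadj'))
      · rcases cr12 _ _ hx hy hadj' with h | h | ⟨hxb, hyb⟩
        · exact Or.inl ((he1 x y).mpr h)
        · exact Or.inr (Or.inl ((he2 x y).mpr h))
        · refine Or.inr (Or.inr (Or.inr ?_))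
          have : x = (⟨b1, hb1⟩ : T) := Subtype.ext hxb
          have hy' : y = (⟨b2, hb2⟩ : T) := Subtype.ext hyb
          subst this; subst hy'; simp
      · rcases cr13 _ _ hx hy hadj' with h | h | ⟨hxb, hyb⟩
        · exact Or.inl ((he1 x y).mpr h)
        · exact Or.inr (Or.inr (Or.inl ((he3 x y).mpr h)))
        · refine Or.inr (Or.inr (Or.inr ?_))
          have : x = (⟨b1, hb1⟩ : T) := Subtype.ext hxb
          have hy' : y = (⟨b3, hb3⟩ : T) := Subtype.ext hyb
          subst this; subst hy'; simp
      · rcases cr12 _ _ hy hx hadj'.symm with h | h | ⟨hxb, hyb⟩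
        · refine Or.inl ?_
          have := (he1 y x).mpr h
          rwa [Sym2.eq_swap] at this
        · refine Or.inr (Or.inl ?_)
          have := (he2 y x).mpr h
          rwa [Sym2.eq_swap] at this
        · refine Or.inr (Or.inr (Or.inr ?_))
          have : y = (⟨b1, hb1⟩ : T) := Subtype.ext hxb
          have hy' : x = (⟨b2, hb2⟩ : T) := Subtype.ext hyb
          subst this; subst hy'
          rw [Sym2.eq_swap]; simp
      · exact Or.inr (Or.inl ((he2 x y).mpr (ch2 _ _ hx hy hadj')))
      · rcases cr23 _ _ hx hy hadj' with h | h | ⟨hxb, hyb⟩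
        · exact Or.inr (Or.inl ((he2 x y).mpr h))
        · exact Or.inr (Or.inr (Or.inl ((he3 x y).mpr h)))
        · refine Or.inr (Or.inr (Or.inr ?_))
          have : x = (⟨b2, hb2⟩ : T) := Subtype.ext hxb
          have hy' : y = (⟨b3, hb3⟩ : T) := Subtype.ext hyb
          subst this; subst hy'; simp
      · rcases cr13 _ _ hy hx hadj'.symm with h | h | ⟨hxb, hyb⟩
        · refine Or.inl ?_
          have := (he1 y x).mpr h
          rwa [Sym2.eq_swap] at this
        · refine Or.inr (Or.inr (Or.inl ?_))
          have := (he3 y x).mpr h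
          rwa [Sym2.eq_swap] at this
        · refine Or.inr (Or.inr (Or.inr ?_))
          have : y = (⟨b1, hb1⟩ : T) := Subtype.ext hxb
          have hy' : x = (⟨b3, hb3⟩ : T) := Subtype.ext hyb
          subst this; subst hy'
          rw [Sym2.eq_swap]; simp
      · rcases cr23 _ _ hy hx hadj'.symm with h | h | ⟨hxb, hyb⟩
        · refine Or.inr (Or.inl ?_)
          have := (he2 y x).mpr h
          rwa [Sym2.eq_swap] at this
        · refine Or.inr (Or.inr (Or.inl ?_))
          have := (he3 y x).mpr h
          rwa [Sym2.eq_swap] at this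
        · refine Or.inr (Or.inr (Or.inr ?_))
          have : y = (⟨b2, hb2⟩ : T) := Subtype.ext hxb
          have hy' : x = (⟨b3, hb3⟩ : T) := Subtype.ext hyb
          subst this; subst hy'
          rw [Sym2.eq_swap]; simp
      · exact Or.inr (Or.inr (Or.inl ((he3 x y).mpr (ch3 _ _ hx hy hadj'))))
    · intro h
      rcases h with h | h | h | h
      · exact q1.adj_of_mem_edges h
      · exact q2.adj_of_mem_edges h
      · exact q3.adj_of_mem_edges h
      · simp only [Set.mem_insert_iff, Set.mem_singleton_iff] at h
        rcases h with h | h | h <;> rw [Sym2.eq_iff] at h <;>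
          rcases h with ⟨rfl, rfl⟩ | ⟨rfl, rfl⟩
        · exact tb12
        · exact tb12.symm
        · exact tb23
        · exact tb23.symm
        · exact tb13
        · exact tb13.symm


lemma prism_of_walks {t1 t2 t3 s1 s2 s3 : V}
    (W1 : G.Walk t1 s1) (W2 : G.Walk t2 s2) (W3 : G.Walk t3 s3)
    (h1 : W1.IsPath) (h2 : W2.IsPath) (h3 : W3.IsPath)
    (l1 : 1 ≤ W1.length) (l2 : 1 ≤ W2.length) (l3 : 1 ≤ W3.length)
    (llong : 2 ≤ W1.length ∨ 2 ≤ W2.length ∨ 2 ≤ W3.length)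
    (d12 : ∀ y, y ∈ W1.support → y ∉ W2.support)
    (d13 : ∀ y, y ∈ W1.support → y ∉ W3.support)
    (d23 : ∀ y, y ∈ W2.support → y ∉ W3.support)
    (tt12 : G.Adj t1 t2) (tt23 : G.Adj t2 t3) (tt13 : G.Adj t1 t3)
    (tb12 : G.Adj s1 s2) (tb23 : G.Adj s2 s3) (tb13 : G.Adj s1 s3)
    (ch1 : Chordless W1) (ch2 : Chordless W2) (ch3 : Chordless W3)
    (cr12 : ∀ y z, y ∈ W1.support → z ∈ W2.support → G.Adj y z →
        (y = t1 ∧ z = t2) ∨ (y = s1 ∧ z = s2))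
    (cr13 : ∀ y z, y ∈ W1.support → z ∈ W3.support → G.Adj y z →
        (y = t1 ∧ z = t3) ∨ (y = s1 ∧ z = s3))
    (cr23 : ∀ y z, y ∈ W2.support → z ∈ W3.support → G.Adj y z →
        (y = t2 ∧ z = t3) ∨ (y = s2 ∧ z = s3)) :
    IsLongPrism (G.induce {v | v ∈ W1.support ∨ v ∈ W2.support ∨ v ∈ W3.support}) := by
  set T : Set V := {v | v ∈ W1.support ∨ v ∈ W2.support ∨ v ∈ W3.support} with hT
  have hT1 : ∀ v ∈ W1.support, v ∈ T := fun v hv => Or.inl hv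
  have hT2 : ∀ v ∈ W2.support, v ∈ T := fun v hv => Or.inr (Or.inl hv)
  have hT3 : ∀ v ∈ W3.support, v ∈ T := fun v hv => Or.inr (Or.inr hv)
  have ht1 : t1 ∈ T := hT1 _ W1.start_mem_support
  have ht2 : t2 ∈ T := hT2 _ W2.start_mem_support
  have ht3 : t3 ∈ T := hT3 _ W3.start_mem_support
  have hb1 : s1 ∈ T := hT1 _ W1.end_mem_support
  have hb2 : s2 ∈ T := hT2 _ W2.end_mem_support
  have hb3 : s3 ∈ T := hT3 _ W3.end_mem_support
  obtain ⟨q1, hq1⟩ := exists_lift W1 hT1 ht1 hb1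
  obtain ⟨q2, hq2⟩ := exists_lift W2 hT2 ht2 hb2
  obtain ⟨q3, hq3⟩ := exists_lift W3 hT3 ht3 hb3
  have hs1 : ∀ x : T, x ∈ q1.support ↔ (x : V) ∈ W1.support := by
    intro x; rw [lift_support_mem q1, hq1]; exact Iff.rfl
  have hs2 : ∀ x : T, x ∈ q2.support ↔ (x : V) ∈ W2.support := by
    intro x; rw [lift_support_mem q2, hq2]; exact Iff.rfl
  have hs3 : ∀ x : T, x ∈ q3.support ↔ (x : V) ∈ W3.support := by
    intro x; rw [lift_support_mem q3, hq3]; exact Iff.rfl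
  have he1 : ∀ x y : T, s(x, y) ∈ q1.edges ↔ s((x : V), (y : V)) ∈ W1.edges := by
    intro x y; rw [lift_edges_mem q1, hq1]; exact Iff.rfl
  have he2 : ∀ x y : T, s(x, y) ∈ q2.edges ↔ s((x : V), (y : V)) ∈ W2.edges := by
    intro x y; rw [lift_edges_mem q2, hq2]; exact Iff.rfl
  have he3 : ∀ x y : T, s(x, y) ∈ q3.edges ↔ s((x : V), (y : V)) ∈ W3.edges := by
    intro x y; rw [lift_edges_mem q3, hq3]; exact Iff.rfl
  have hl1 : q1.length = W1.length := (Walk.length_map (Embedding.induce T).toHom q1).symm.trans (congrArg Walk.length hq1)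
  have hl2 : q2.length = W2.length := (Walk.length_map (Embedding.induce T).toHom q2).symm.trans (congrArg Walk.length hq2)
  have hl3 : q3.length = W3.length := (Walk.length_map (Embedding.induce T).toHom q3).symm.trans (congrArg Walk.length hq3)
  refine ⟨⟨t1, ht1⟩, ⟨t2, ht2⟩, ⟨t3, ht3⟩, ⟨s1, hb1⟩, ⟨s2, hb2⟩, ⟨s3, hb3⟩, q1, q2, q3,
    Walk.IsPath.of_map (f := (Embedding.induce T).toHom) (hq1.symm ▸ h1),
    Walk.IsPath.of_map (f := (Embedding.induce T).toHom) (hq2.symm ▸ h2),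
    Walk.IsPath.of_map (f := (Embedding.induce T).toHom) (hq3.symm ▸ h3),
    by omega, by omega, by omega, by omega, ?_, ?_, ?_, ?_, ?_⟩
  · intro x
    rcases x.2 with hx | hx | hx
    · exact Or.inl ((hs1 x).mpr hx)
    · exact Or.inr (Or.inl ((hs2 x).mpr hx))
    · exact Or.inr (Or.inr ((hs3 x).mpr hx))
  · intro x hx1 hx2
    exact d12 _ ((hs1 x).mp hx1) ((hs2 x).mp hx2)
  · intro x hx1 hx3
    exact d13 _ ((hs1 x).mp hx1) ((hs3 x).mp hx3)
  · intro x hx2 hx3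
    exact d23 _ ((hs2 x).mp hx2) ((hs3 x).mp hx3)
  · intro x y
    constructor
    · intro hadj
      have hadj' : G.Adj (x : V) (y : V) := hadj
      have hx := x.2
      have hy := y.2
      have pair : ∀ (u v : T) (p q : V) (hp : p ∈ T) (hq : q ∈ T),
          u = (⟨p, hp⟩ : T) → v = (⟨q, hq⟩ : T) →
          s(u, v) = s((⟨p, hp⟩ : T), (⟨q, hq⟩ : T)) := by
        intro u v p q hp hq hxp hyq; rw [hxp, hyq]
      rcases hx with hx | hx | hx <;> rcases hy with hy | hy | hy
      · exact Or.inl ((he1 x y).mpr (ch1 _ _ hx hy hadj'))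
      · rcases cr12 _ _ hx hy hadj' with ⟨hxt, hyt⟩ | ⟨hxb, hyb⟩
        · refine Or.inr (Or.inr (Or.inr ?_))
          rw [pair x y t1 t2 ht1 ht2 (Subtype.ext hxt) (Subtype.ext hyt)]
          simp
        · refine Or.inr (Or.inr (Or.inr ?_))
          rw [pair x y s1 s2 hb1 hb2 (Subtype.ext hxb) (Subtype.ext hyb)]
          simp
      · rcases cr13 _ _ hx hy hadj' with ⟨hxt, hyt⟩ | ⟨hxb, hyb⟩
        · refine Or.inr (Or.inr (Or.inr ?_))
          rw [pair x y t1 t3 ht1 ht3 (Subtype.ext hxt) (Subtype.ext hyt)]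
          simp
        · refine Or.inr (Or.inr (Or.inr ?_))
          rw [pair x y s1 s3 hb1 hb3 (Subtype.ext hxb) (Subtype.ext hyb)]
          simp
      · rcases cr12 _ _ hy hx hadj'.symm with ⟨hxt, hyt⟩ | ⟨hxb, hyb⟩
        · refine Or.inr (Or.inr (Or.inr ?_))
          rw [pair x y t2 t1 ht2 ht1 (Subtype.ext hyt) (Subtype.ext hxt), Sym2.eq_swap]
          simp
        · refine Or.inr (Or.inr (Or.inr ?_))
          rw [pair x y s2 s1 hb2 hb1 (Subtype.ext hyb) (Subtype.ext hxb), Sym2.eq_swap]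
          simp
      · exact Or.inr (Or.inl ((he2 x y).mpr (ch2 _ _ hx hy hadj')))
      · rcases cr23 _ _ hx hy hadj' with ⟨hxt, hyt⟩ | ⟨hxb, hyb⟩
        · refine Or.inr (Or.inr (Or.inr ?_))
          rw [pair x y t2 t3 ht2 ht3 (Subtype.ext hxt) (Subtype.ext hyt)]
          simp
        · refine Or.inr (Or.inr (Or.inr ?_))
          rw [pair x y s2 s3 hb2 hb3 (Subtype.ext hxb) (Subtype.ext hyb)]
          simp
      · rcases cr13 _ _ hy hx hadj'.symm with ⟨hxt, hyt⟩ | ⟨hxb, hyb⟩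
        · refine Or.inr (Or.inr (Or.inr ?_))
          rw [pair x y t3 t1 ht3 ht1 (Subtype.ext hyt) (Subtype.ext hxt), Sym2.eq_swap]
          simp
        · refine Or.inr (Or.inr (Or.inr ?_))
          rw [pair x y s3 s1 hb3 hb1 (Subtype.ext hyb) (Subtype.ext hxb), Sym2.eq_swap]
          simp
      · rcases cr23 _ _ hy hx hadj'.symm with ⟨hxt, hyt⟩ | ⟨hxb, hyb⟩
        · refine Or.inr (Or.inr (Or.inr ?_))
          rw [pair x y t3 t2 ht3 ht2 (Subtype.ext hyt) (Subtype.ext hxt), Sym2.eq_swap]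
          simp
        · refine Or.inr (Or.inr (Or.inr ?_))
          rw [pair x y s3 s2 hb3 hb2 (Subtype.ext hyb) (Subtype.ext hxb), Sym2.eq_swap]
          simp
      · exact Or.inr (Or.inr (Or.inl ((he3 x y).mpr (ch3 _ _ hx hy hadj'))))
    · intro h
      rcases h with h | h | h | h
      · exact q1.adj_of_mem_edges h
      · exact q2.adj_of_mem_edges h
      · exact q3.adj_of_mem_edges h
      · simp only [Set.mem_insert_iff, Set.mem_singleton_iff] at h
        rcases h with h | h | h | h | h | h <;> rw [Sym2.eq_iff] at h <;>
          rcases h with ⟨rfl, rfl⟩ | ⟨rfl, rfl⟩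
        · exact tt12
        · exact tt12.symm
        · exact tt23
        · exact tt23.symm
        · exact tt13
        · exact tt13.symm
        · exact tb12
        · exact tb12.symm
        · exact tb23
        · exact tb23.symm
        · exact tb13
        · exact tb13.symm


set_option maxHeartbeats 1000000 in
lemma crux [DecidableEq V]
    (hpyr : ∀ T : Set V, ¬ IsPyramid (G.induce T))
    {a1 a2 v1 v2 v3 x : V}
    (P : G.Walk a1 a2) (hPp : P.IsPath) (hPch : Chordless P) (hPlen : 2 ≤ P.length)
    (R : G.Walk x v3) (hRp : R.IsPath) (hRch : Chordless R) (hRlen : 1 ≤ R.length)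
    (hdisj : ∀ y ∈ R.support, y ∉ P.support)
    (hRP : ∀ y ∈ R.support, y ≠ x → ∀ z ∈ P.support, ¬ G.Adj y z)
    (hxnbr : ∃ z ∈ P.support, G.Adj x z)
    (hv1P : ∀ z ∈ P.support, G.Adj v1 z → z = a1) (hv1a1 : G.Adj v1 a1)
    (hv2P : ∀ z ∈ P.support, G.Adj v2 z → z = a2) (hv2a2 : G.Adj v2 a2)
    (hv1R : ∀ y ∈ R.support, y ≠ v3 → ¬ G.Adj v1 y)
    (hv2R : ∀ y ∈ R.support, y ≠ v3 → ¬ G.Adj v2 y)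
    (hv12 : G.Adj v1 v2) (hv13 : G.Adj v1 v3) (hv23 : G.Adj v2 v3)
    (hv1nP : v1 ∉ P.support) (hv2nP : v2 ∉ P.support)
    (hv1nR : v1 ∉ R.support) (hv2nR : v2 ∉ R.support)
    (hlong : 2 ≤ R.length ∨ (¬ G.Adj x a1 ∧ ¬ G.Adj x a2)) :
    ∃ T : Set V, IsLongPrism (G.induce T) := by
  classical
  -- basic facts
  have hxR : x ∈ R.support := R.start_mem_support
  have hv3R : v3 ∈ R.support := R.end_mem_support
  have hxP : x ∉ P.support := hdisj x hxR
  have hxv3 : x ≠ v3 := by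
    intro h
    subst h
    have := ends_ne hRp
    omega
  have hv3P : ∀ z ∈ P.support, ¬ G.Adj v3 z := hRP v3 hv3R (Ne.symm hxv3)
  have ha1 : P.getVert 0 = a1 := P.getVert_zero
  have ha2 : P.getVert P.length = a2 := P.getVert_length
  -- the extreme neighbours of x on P
  have hex : ∃ i, i ≤ P.length ∧ G.Adj x (P.getVert i) := by
    obtain ⟨z0, hz0, hadj0⟩ := hxnbr
    obtain ⟨i, hiv, hile⟩ := Walk.mem_support_iff_exists_getVert.mp hz0
    exact ⟨i, hile, hiv ▸ hadj0⟩
  set i0 := Nat.find hex with hi0def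
  obtain ⟨hi0le, hxu⟩ : i0 ≤ P.length ∧ G.Adj x (P.getVert i0) := Nat.find_spec hex
  have posmin : ∀ j, j ≤ P.length → G.Adj x (P.getVert j) → i0 ≤ j := by
    intro j hj hadj
    exact Nat.find_min' hex ⟨hj, hadj⟩
  set i1 := Nat.findGreatest (fun i => G.Adj x (P.getVert i)) P.length with hi1def
  have hxw : G.Adj x (P.getVert i1) := by
    have h := Nat.findGreatest_spec (P := fun i => G.Adj x (P.getVert i)) (m := i0) hi0le hxu
    exact h
  have hi1le : i1 ≤ P.length := Nat.findGreatest_le _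
  have posmax : ∀ j, j ≤ P.length → G.Adj x (P.getVert j) → j ≤ i1 := by
    intro j hj hadj
    exact Nat.le_findGreatest hj hadj
  have hi01 : i0 ≤ i1 := posmax i0 hi0le hxu
  set u := P.getVert i0 with hudef
  set w := P.getVert i1 with hwdef
  have hu : u ∈ P.support := getVert_mem_support P hi0le
  have hw : w ∈ P.support := getVert_mem_support P hi1le
  -- the prefix A
  set A := P.takeUntil u hu with hAdef
  have hAlen : A.length = i0 := by
    refine getVert_inj hPp (P.length_takeUntil_le hu) hi0le ?_
    rw [hAdef, getVert_take_length]
  set rest := P.dropUntil u hu with hrestdef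
  have hrestlen : i0 + rest.length = P.length := by
    have h' := length_take_add P hu
    rw [← hAdef, ← hrestdef, hAlen] at h'
    omega
  have hApath : A.IsPath := hPp.takeUntil hu
  have hrestpath : rest.IsPath := hPp.dropUntil hu
  have hAsub : ∀ y ∈ A.support, y ∈ P.support := fun y hy => P.support_takeUntil_subset hu hy
  have hrestsub : ∀ y ∈ rest.support, y ∈ P.support :=
    fun y hy => P.support_dropUntil_subset hu hy
  have idxA : ∀ y ∈ A.support, ∃ j, j ≤ i0 ∧ y = P.getVert j := by
    intro y hy
    obtain ⟨j, hjv, hjle⟩ := Walk.mem_support_iff_exists_getVert.mp hy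
    refine ⟨j, hAlen ▸ hjle, ?_⟩
    rw [getVert_take P hu (hAlen ▸ hjle : j ≤ A.length), hjv]
  have idxrest : ∀ y ∈ rest.support, ∃ k, k ≤ rest.length ∧ y = P.getVert (i0 + k) := by
    intro y hy
    obtain ⟨k, hkv, hkle⟩ := Walk.mem_support_iff_exists_getVert.mp hy
    refine ⟨k, hkle, ?_⟩
    have h' := getVert_drop P hu k
    rw [← hAdef, ← hrestdef, hAlen] at h'
    rw [h', hkv]
  -- index uniqueness and chord facts
  have K1 : ∀ {j k}, j ≤ P.length → k ≤ P.length → P.getVert j = P.getVert k → j = k :=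
    fun hj hk he => getVert_inj hPp hj hk he
  have K2 : ∀ j k, j ≤ P.length → k ≤ P.length → G.Adj (P.getVert j) (P.getVert k) →
      j = k + 1 ∨ k = j + 1 := by
    intro j k hj hk hadj
    have he := hPch _ _ (getVert_mem_support P hj) (getVert_mem_support P hk) hadj
    obtain ⟨i, hilt, hor⟩ := edge_index P he
    rcases hor with ⟨h1, h2⟩ | ⟨h1, h2⟩
    · have : i = j := K1 (by omega) hj h1
      have : i + 1 = k := K1 (by omega) hk h2
      omega
    · have : i = k := K1 (by omega) hk h1
      have : i + 1 = j := K1 (by omega) hj h2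
      omega
  -- neighbours of x in A only at u
  have nA : ∀ y ∈ A.support, G.Adj x y → y = u := by
    intro y hy hadj
    obtain ⟨j, hjle, rfl⟩ := idxA y hy
    have := posmin j (by omega) hadj
    have : j = i0 := by omega
    rw [this]
  -- case split
  rcases Nat.lt_or_ge i0 i1 with hlt | hge
  · -- shared: the suffix B after w
    have grest : ∀ k, rest.getVert k = P.getVert (i0 + k) := by
      intro k
      have h' := getVert_drop P hu k
      rw [← hAdef, ← hrestdef, hAlen] at h'
      rw [h']
    have hwrest : w ∈ rest.support := by
      have h1 : rest.getVert (i1 - i0) = w := by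
        rw [grest (i1 - i0), hwdef]
        congr 1
        omega
      rw [← h1]
      exact getVert_mem_support _ (by omega)
    set B := rest.dropUntil w hwrest with hBdef
    set M := rest.takeUntil w hwrest with hMdef
    have hMlen : M.length = i1 - i0 := by
      refine getVert_inj hrestpath (rest.length_takeUntil_le hwrest) (by omega) ?_
      rw [hMdef, getVert_take_length, grest (i1 - i0), hwdef]
      congr 1
      omega
    have hBlen : i1 + B.length = P.length := by
      have h' := length_take_add rest hwrest
      rw [← hMdef, ← hBdef, hMlen] at h'
      omega
    have hBsub : ∀ y ∈ B.support, y ∈ P.support := by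
      intro y hy
      exact hrestsub y (rest.support_dropUntil_subset hwrest hy)
    have hBpath : B.IsPath := hrestpath.dropUntil hwrest
    have chB : Chordless B := chordless_dropUntil hrestpath
      (chordless_dropUntil hPp hPch hu) hwrest
    have idxB : ∀ y ∈ B.support, ∃ k, k ≤ B.length ∧ y = P.getVert (i1 + k) := by
      intro y hy
      obtain ⟨k, hkv, hkle⟩ := Walk.mem_support_iff_exists_getVert.mp hy
      refine ⟨k, hkle, ?_⟩
      have h' := getVert_drop rest hwrest k
      rw [← hMdef, ← hBdef, hMlen] at h'
      rw [← hkv, ← h', grest]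
      congr 1
      omega
    have nB : ∀ y ∈ B.support, G.Adj x y → y = w := by
      intro y hy hadj
      obtain ⟨k, hkle, rfl⟩ := idxB y hy
      have h1 := posmax (i1 + k) (by omega) hadj
      have hk0 : i1 + k = i1 := by omega
      rw [hk0]
    have dAB : ∀ y ∈ A.support, y ∉ B.support := by
      intro y hyA hyB
      obtain ⟨j, hjle, hjv⟩ := idxA y hyA
      obtain ⟨k, hkle, hkv⟩ := idxB y hyB
      have : j = i1 + k := K1 (by omega) (by omega) (by rw [← hjv, ← hkv])
      omega
    have crossAB : ∀ y ∈ A.support, ∀ z ∈ B.support, G.Adj y z →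
        i1 = i0 + 1 ∧ y = u ∧ z = w := by
      intro y hyA z hzB hadj
      obtain ⟨j, hjle, rfl⟩ := idxA y hyA
      obtain ⟨k, hkle, rfl⟩ := idxB z hzB
      rcases K2 j (i1 + k) (by omega) (by omega) hadj with h | h
      · omega
      · have hj : j = i0 := by omega
        have hk : k = 0 := by omega
        have hi : i1 = i0 + 1 := by omega
        have hik : i1 + k = i1 := by omega
        refine ⟨hi, ?_, ?_⟩
        · rw [hj]
        · rw [hik, hwdef]
    have ha2A : ∀ y ∈ A.support, y ≠ a2 := by
      intro y hy
      obtain ⟨j, hjle, rfl⟩ := idxA y hy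
      intro hja
      have : j = P.length := K1 (by omega) (le_refl _) (by rw [hja, ha2])
      omega
    have ha1B : ∀ z ∈ B.support, z ≠ a1 := by
      intro z hz
      obtain ⟨k, hkle, rfl⟩ := idxB z hz
      intro hka
      have : i1 + k = 0 := K1 (by omega) (by omega) (by rw [hka, ha1])
      omega
    have hxA : x ∉ A.support := fun h => hxP (hAsub x h)
    have hxB : x ∉ B.support := fun h => hxP (hBsub x h)
    have hxv1 : x ≠ v1 := fun h => hv1nR (h ▸ hxR)
    have hxv2 : x ≠ v2 := fun h => hv2nR (h ▸ hxR)
    have hnv1x : ¬ G.Adj v1 x := hv1R x hxR hxv3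
    have hnv2x : ¬ G.Adj v2 x := hv2R x hxR hxv3
    -- chordless inner walks
    have chA' : Chordless (A.reverse.concat hv1a1.symm) := by
      refine chordless_concat (chordless_reverse (chordless_takeUntil hPp hPch hu))
        hv1a1.symm ?_
      intro y hy hadj
      rw [Walk.support_reverse, List.mem_reverse] at hy
      exact hv1P y (hAsub y hy) hadj
    have chB' : Chordless (B.concat hv2a2.symm) := by
      exact chordless_concat chB hv2a2.symm (fun y hy hadj => hv2P y (hBsub y hy) hadj)
    have pA' : (A.reverse.concat hv1a1.symm).IsPath := by
      refine isPath_concat hApath.reverse hv1a1.symm ?_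
      rw [Walk.support_reverse, List.mem_reverse]
      exact fun h => hv1nP (hAsub v1 h)
    have pB' : (B.concat hv2a2.symm).IsPath :=
      isPath_concat hBpath hv2a2.symm (fun h => hv2nP (hBsub v2 h))
    have sA' : ∀ y, y ∈ (A.reverse.concat hv1a1.symm).support ↔ (y ∈ A.support ∨ y = v1) := by
      intro y
      rw [mem_support_concat, Walk.support_reverse, List.mem_reverse]
    have sB' : ∀ y, y ∈ (B.concat hv2a2.symm).support ↔ (y ∈ B.support ∨ y = v2) := by
      intro y; rw [mem_support_concat]
    have eA'v : s(a1, v1) ∈ (A.reverse.concat hv1a1.symm).edges := by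
      rw [Walk.edges_concat, List.concat_eq_append, List.mem_append]
      right; simp
    have eA'A : ∀ e ∈ A.edges, e ∈ (A.reverse.concat hv1a1.symm).edges := by
      intro e he
      rw [Walk.edges_concat, List.concat_eq_append, List.mem_append]
      left; rw [Walk.edges_reverse, List.mem_reverse]; exact he
    have eB'v : s(a2, v2) ∈ (B.concat hv2a2.symm).edges := by
      rw [Walk.edges_concat, List.concat_eq_append, List.mem_append]
      right; simp
    have eB'B : ∀ e ∈ B.edges, e ∈ (B.concat hv2a2.symm).edges := by
      intro e he
      rw [Walk.edges_concat, List.concat_eq_append, List.mem_append]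
      exact Or.inl he
    have lA' : (A.reverse.concat hv1a1.symm).length = i0 + 1 := by
      rw [Walk.length_concat, Walk.length_reverse, hAlen]
    have lB' : (B.concat hv2a2.symm).length = B.length + 1 := by
      rw [Walk.length_concat]
    rcases Nat.lt_or_ge (i0 + 1) i1 with hlt2 | hge2
    · -- case (c): nonconsecutive, pyramid with apex x
      set W1 := Walk.cons hxu (A.reverse.concat hv1a1.symm) with hW1def
      set W2 := Walk.cons hxw (B.concat hv2a2.symm) with hW2def
      have sW1 : ∀ y, y ∈ W1.support ↔ (y = x ∨ (y ∈ A.support ∨ y = v1)) := by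
        intro y
        rw [hW1def, Walk.support_cons, List.mem_cons, sA']
      have sW2 : ∀ y, y ∈ W2.support ↔ (y = x ∨ (y ∈ B.support ∨ y = v2)) := by
        intro y
        rw [hW2def, Walk.support_cons, List.mem_cons, sB']
      have eW1x : s(x, u) ∈ W1.edges := by rw [hW1def, Walk.edges_cons]; simp
      have eW2x : s(x, w) ∈ W2.edges := by rw [hW2def, Walk.edges_cons]; simp
      have eW1A : ∀ e ∈ A.edges, e ∈ W1.edges := by
        intro e he
        rw [hW1def, Walk.edges_cons]
        exact List.mem_cons_of_mem _ (eA'A e he)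
      have eW1v : s(a1, v1) ∈ W1.edges := by
        rw [hW1def, Walk.edges_cons]
        exact List.mem_cons_of_mem _ eA'v
      have eW2B : ∀ e ∈ B.edges, e ∈ W2.edges := by
        intro e he
        rw [hW2def, Walk.edges_cons]
        exact List.mem_cons_of_mem _ (eB'B e he)
      have eW2v : s(a2, v2) ∈ W2.edges := by
        rw [hW2def, Walk.edges_cons]
        exact List.mem_cons_of_mem _ eB'v
      have hW1p : W1.IsPath := by
        rw [hW1def, Walk.cons_isPath_iff]
        refine ⟨pA', ?_⟩
        rw [sA']
        rintro (h | h)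
        · exact hxA h
        · exact hxv1 h
      have hW2p : W2.IsPath := by
        rw [hW2def, Walk.cons_isPath_iff]
        refine ⟨pB', ?_⟩
        rw [sB']
        rintro (h | h)
        · exact hxB h
        · exact hxv2 h
      have lW1 : W1.length = i0 + 2 := by rw [hW1def, Walk.length_cons, lA']
      have lW2 : W2.length = B.length + 2 := by rw [hW2def, Walk.length_cons, lB']
      have chW1 : Chordless W1 := by
        rw [hW1def]
        refine chordless_cons chA' hxu ?_
        intro y hy hadj
        rw [sA'] at hy
        rcases hy with hy | hyv
        · exact nA y hy hadj
        · rw [hyv] at hadj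
          exact absurd hadj.symm hnv1x
      have chW2 : Chordless W2 := by
        rw [hW2def]
        refine chordless_cons chB' hxw ?_
        intro y hy hadj
        rw [sB'] at hy
        rcases hy with hy | hyv
        · exact nB y hy hadj
        · rw [hyv] at hadj
          exact absurd hadj.symm hnv2x
      have m12 : ∀ y, y ∈ W1.support → y ∈ W2.support → y = x := by
        intro y hy1 hy2
        rw [sW1] at hy1; rw [sW2] at hy2
        rcases hy1 with hyx | hy1
        · exact hyx
        rcases hy2 with hyx | hy2
        · exact hyx
        rcases hy1 with hy1 | hyv
        · rcases hy2 with hy2 | hyv2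
          · exact absurd hy2 (dAB y hy1)
          · rw [hyv2] at hy1; exact absurd (hAsub _ hy1) hv2nP
        · rcases hy2 with hy2 | hyv2
          · rw [hyv] at hy2; exact absurd (hBsub _ hy2) hv1nP
          · rw [hyv] at hyv2; exact absurd hyv2 hv12.ne
      have m13 : ∀ y, y ∈ W1.support → y ∈ R.support → y = x := by
        intro y hy1 hy3
        rw [sW1] at hy1
        rcases hy1 with hyx | hy1
        · exact hyx
        rcases hy1 with hy1 | hyv
        · exact absurd (hAsub _ hy1) (hdisj _ hy3)
        · rw [hyv] at hy3; exact absurd hy3 hv1nR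
      have m23 : ∀ y, y ∈ W2.support → y ∈ R.support → y = x := by
        intro y hy2 hy3
        rw [sW2] at hy2
        rcases hy2 with hyx | hy2
        · exact hyx
        rcases hy2 with hy2 | hyv
        · exact absurd (hBsub _ hy2) (hdisj _ hy3)
        · rw [hyv] at hy3; exact absurd hy3 hv2nR
      have cr12 : ∀ y z, y ∈ W1.support → z ∈ W2.support → G.Adj y z →
          s(y, z) ∈ W1.edges ∨ s(y, z) ∈ W2.edges ∨ (y = v1 ∧ z = v2) := by
        intro y z hy hz hadj
        rw [sW1] at hy; rw [sW2] at hz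
        rcases hy with hyx | hy
        · rw [hyx] at hadj ⊢
          rcases hz with hzx | hz
          · rw [hzx] at hadj; exact absurd hadj (G.loopless.irrefl x)
          rcases hz with hz | hzv
          · have hzw : z = w := nB z hz hadj
            rw [hzw]
            exact Or.inr (Or.inl eW2x)
          · rw [hzv] at hadj; exact absurd hadj.symm hnv2x
        rcases hz with hzx | hz
        · rw [hzx] at hadj ⊢
          rcases hy with hy | hyv
          · have hyu : y = u := nA y hy hadj.symm
            rw [hyu]
            refine Or.inl ?_
            rw [Sym2.eq_swap]
            exact eW1x
          · rw [hyv] at hadj; exact absurd hadj hnv1x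
        rcases hy with hy | hyv
        · rcases hz with hz | hzv
          · obtain ⟨hi, _, _⟩ := crossAB y hy z hz hadj
            omega
          · rw [hzv] at hadj
            have hya : y = a2 := hv2P y (hAsub y hy) hadj.symm
            exact absurd hya (ha2A y hy)
        · rcases hz with hz | hzv
          · rw [hyv] at hadj
            have hza : z = a1 := hv1P z (hBsub z hz) hadj
            exact absurd hza (ha1B z hz)
          · exact Or.inr (Or.inr ⟨hyv, hzv⟩)
      have cr13 : ∀ y z, y ∈ W1.support → z ∈ R.support → G.Adj y z →
          s(y, z) ∈ W1.edges ∨ s(y, z) ∈ R.edges ∨ (y = v1 ∧ z = v3) := by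
        intro y z hy hz hadj
        rw [sW1] at hy
        rcases hy with hyx | hy
        · rw [hyx] at hadj ⊢
          exact Or.inr (Or.inl (hRch x z hxR hz hadj))
        rcases hy with hy | hyv
        · by_cases hzx : z = x
          · rw [hzx] at hadj ⊢
            have hyu : y = u := nA y hy hadj.symm
            rw [hyu]
            refine Or.inl ?_
            rw [Sym2.eq_swap]
            exact eW1x
          · exact absurd hadj.symm (hRP z hz hzx y (hAsub y hy))
        · by_cases hzv : z = v3
          · exact Or.inr (Or.inr ⟨hyv, hzv⟩)
          · rw [hyv] at hadj; exact absurd hadj (hv1R z hz hzv)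
      have cr23 : ∀ y z, y ∈ W2.support → z ∈ R.support → G.Adj y z →
          s(y, z) ∈ W2.edges ∨ s(y, z) ∈ R.edges ∨ (y = v2 ∧ z = v3) := by
        intro y z hy hz hadj
        rw [sW2] at hy
        rcases hy with hyx | hy
        · rw [hyx] at hadj ⊢
          exact Or.inr (Or.inl (hRch x z hxR hz hadj))
        rcases hy with hy | hyv
        · by_cases hzx : z = x
          · rw [hzx] at hadj ⊢
            have hyw : y = w := nB y hy hadj.symm
            rw [hyw]
            refine Or.inl ?_
            rw [Sym2.eq_swap]
            exact eW2x
          · exact absurd hadj.symm (hRP z hz hzx y (hBsub y hy))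
        · by_cases hzv : z = v3
          · exact Or.inr (Or.inr ⟨hyv, hzv⟩)
          · rw [hyv] at hadj; exact absurd hadj (hv2R z hz hzv)
      exact absurd (pyramid_of_walks W1 W2 R hW1p hW2p hRp (by omega) (by omega) (by omega)
        (Or.inl ⟨by omega, by omega⟩) m12 m13 m23 hv12 hv23 hv13 chW1 chW2 hRch
        cr12 cr13 cr23) (hpyr _)
    · -- case (b): consecutive, prism
      have hi1 : i1 = i0 + 1 := by omega
      set W1 := A.reverse.concat hv1a1.symm with hW1def
      set W2 := B.concat hv2a2.symm with hW2def
      have tt12 : G.Adj u w := by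
        have h' := P.adj_getVert_succ (i := i0) (by omega)
        rw [hudef, hwdef, hi1]
        exact h'
      have d12 : ∀ y, y ∈ W1.support → y ∉ W2.support := by
        intro y hy1 hy2
        rw [sA'] at hy1; rw [sB'] at hy2
        rcases hy1 with hy1 | hyv
        · rcases hy2 with hy2 | hyv2
          · exact dAB y hy1 hy2
          · rw [hyv2] at hy1; exact hv2nP (hAsub _ hy1)
        · rcases hy2 with hy2 | hyv2
          · rw [hyv] at hy2; exact hv1nP (hBsub _ hy2)
          · rw [hyv] at hyv2; exact hv12.ne hyv2
      have d13 : ∀ y, y ∈ W1.support → y ∉ R.support := by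
        intro y hy1 hy3
        rw [sA'] at hy1
        rcases hy1 with hy1 | hyv
        · exact hdisj _ hy3 (hAsub _ hy1)
        · rw [hyv] at hy3; exact hv1nR hy3
      have d23 : ∀ y, y ∈ W2.support → y ∉ R.support := by
        intro y hy2 hy3
        rw [sB'] at hy2
        rcases hy2 with hy2 | hyv
        · exact hdisj _ hy3 (hBsub _ hy2)
        · rw [hyv] at hy3; exact hv2nR hy3
      have llong : 2 ≤ W1.length ∨ 2 ≤ W2.length ∨ 2 ≤ R.length := by
        rcases hlong with h2R | ⟨hna1, hna2⟩
        · right; right; exact h2R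
        · left
          have hi0pos : 1 ≤ i0 := by
            by_contra h0
            have : i0 = 0 := by omega
            have hua : u = a1 := by rw [hudef, this, ha1]
            rw [hua] at hxu
            exact hna1 hxu
          rw [hW1def, lA']
          omega
      have cr12 : ∀ y z, y ∈ W1.support → z ∈ W2.support → G.Adj y z →
          (y = u ∧ z = w) ∨ (y = v1 ∧ z = v2) := by
        intro y z hy hz hadj
        rw [sA'] at hy; rw [sB'] at hz
        rcases hy with hy | hyv
        · rcases hz with hz | hzv
          · obtain ⟨_, hyu, hzw⟩ := crossAB y hy z hz hadj
            exact Or.inl ⟨hyu, hzw⟩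
          · rw [hzv] at hadj
            have hya : y = a2 := hv2P y (hAsub y hy) hadj.symm
            exact absurd hya (ha2A y hy)
        · rcases hz with hz | hzv
          · rw [hyv] at hadj
            have hza : z = a1 := hv1P z (hBsub z hz) hadj
            exact absurd hza (ha1B z hz)
          · exact Or.inr ⟨hyv, hzv⟩
      have cr13 : ∀ y z, y ∈ W1.support → z ∈ R.support → G.Adj y z →
          (y = u ∧ z = x) ∨ (y = v1 ∧ z = v3) := by
        intro y z hy hz hadj
        rw [sA'] at hy
        rcases hy with hy | hyv
        · by_cases hzx : z = x
          · rw [hzx] at hadj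
            have hyu : y = u := nA y hy hadj.symm
            exact Or.inl ⟨hyu, hzx⟩
          · exact absurd hadj.symm (hRP z hz hzx y (hAsub y hy))
        · by_cases hzv : z = v3
          · exact Or.inr ⟨hyv, hzv⟩
          · rw [hyv] at hadj; exact absurd hadj (hv1R z hz hzv)
      have cr23 : ∀ y z, y ∈ W2.support → z ∈ R.support → G.Adj y z →
          (y = w ∧ z = x) ∨ (y = v2 ∧ z = v3) := by
        intro y z hy hz hadj
        rw [sB'] at hy
        rcases hy with hy | hyv
        · by_cases hzx : z = x
          · rw [hzx] at hadj
            have hyw : y = w := nB y hy hadj.symm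
            exact Or.inl ⟨hyw, hzx⟩
          · exact absurd hadj.symm (hRP z hz hzx y (hBsub y hy))
        · by_cases hzv : z = v3
          · exact Or.inr ⟨hyv, hzv⟩
          · rw [hyv] at hadj; exact absurd hadj (hv2R z hz hzv)
      refine ⟨_, prism_of_walks W1 W2 R pA' pB' hRp (by rw [hW1def, lA']; omega)
        (by rw [hW2def, lB']; omega) (by omega) llong d12 d13 d23
        tt12 hxw.symm hxu.symm hv12 hv23 hv13 chA' chB' hRch cr12 cr13 cr23⟩
  · -- case (a): u = w, pyramid with apex u
    have hi1 : i1 = i0 := by omega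
    have hxu' : G.Adj u x := hxu.symm
    set W1 := A.reverse.concat hv1a1.symm with hW1def
    set W2 := rest.concat hv2a2.symm with hW2def
    set W3 := Walk.cons hxu' R with hW3def
    have sW1 : ∀ y, y ∈ W1.support ↔ (y ∈ A.support ∨ y = v1) := by
      intro y
      rw [hW1def, mem_support_concat, Walk.support_reverse, List.mem_reverse]
    have sW2 : ∀ y, y ∈ W2.support ↔ (y ∈ rest.support ∨ y = v2) := by
      intro y; rw [hW2def, mem_support_concat]
    have sW3 : ∀ y, y ∈ W3.support ↔ (y = u ∨ y ∈ R.support) := by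
      intro y; rw [hW3def, Walk.support_cons, List.mem_cons]
    have eW1v : s(a1, v1) ∈ W1.edges := by
      rw [hW1def, Walk.edges_concat, List.concat_eq_append, List.mem_append]
      right; simp
    have eW1A : ∀ e ∈ A.edges, e ∈ W1.edges := by
      intro e he
      rw [hW1def, Walk.edges_concat, List.concat_eq_append, List.mem_append]
      left; rw [Walk.edges_reverse, List.mem_reverse]; exact he
    have eW2v : s(a2, v2) ∈ W2.edges := by
      rw [hW2def, Walk.edges_concat, List.concat_eq_append, List.mem_append]
      right; simp
    have eW2rest : ∀ e ∈ rest.edges, e ∈ W2.edges := by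
      intro e he
      rw [hW2def, Walk.edges_concat, List.concat_eq_append, List.mem_append]
      exact Or.inl he
    have eW3x : s(u, x) ∈ W3.edges := by rw [hW3def, Walk.edges_cons]; simp
    have eW3R : ∀ e ∈ R.edges, e ∈ W3.edges := by
      intro e he; rw [hW3def, Walk.edges_cons]; exact List.mem_cons_of_mem _ he
    have hsplit : A.append rest = P := by rw [hAdef, hrestdef]; exact P.take_spec hu
    have hPsplit : (A.append rest).IsPath := by rw [hsplit]; exact hPp
    have splitE : ∀ {y z : V}, s(y, z) ∈ P.edges → s(y, z) ∈ A.edges ∨ s(y, z) ∈ rest.edges := by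
      intro y z he
      rw [← hsplit, Walk.edges_append, List.mem_append] at he
      exact he
    have edgeA : ∀ {y z : V}, y ∈ A.support → z ∈ A.support → G.Adj y z → s(y, z) ∈ A.edges := by
      intro y z hy hz hadj
      exact edge_mem_left hPsplit
        (by rw [hsplit]; exact hPch y z (hAsub y hy) (hAsub z hz) hadj) hy hz
    have edgerest : ∀ {y z : V}, y ∈ rest.support → z ∈ rest.support → G.Adj y z →
        s(y, z) ∈ rest.edges := by
      intro y z hy hz hadj
      exact edge_mem_right hPsplit
        (by rw [hsplit]; exact hPch y z (hrestsub y hy) (hrestsub z hz) hadj) hy hz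
    have nrest : ∀ y ∈ rest.support, G.Adj x y → y = u := by
      intro y hy hadj
      obtain ⟨k, hkle, rfl⟩ := idxrest y hy
      have h1 := posmax (i0 + k) (by omega) hadj
      have hk0 : i0 + k = i0 := by omega
      rw [hk0]
    have hW1p : W1.IsPath := by
      rw [hW1def]
      refine isPath_concat hApath.reverse hv1a1.symm ?_
      rw [Walk.support_reverse, List.mem_reverse]
      exact fun h => hv1nP (hAsub v1 h)
    have hW2p : W2.IsPath := by
      rw [hW2def]
      exact isPath_concat hrestpath hv2a2.symm (fun h => hv2nP (hrestsub v2 h))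
    have hW3p : W3.IsPath := by
      rw [hW3def, Walk.cons_isPath_iff]
      exact ⟨hRp, fun h => hdisj u h hu⟩
    have lW1 : W1.length = i0 + 1 := by
      rw [hW1def, Walk.length_concat, Walk.length_reverse, hAlen]
    have lW2 : W2.length = rest.length + 1 := by rw [hW2def, Walk.length_concat]
    have lW3 : W3.length = R.length + 1 := by rw [hW3def, Walk.length_cons]
    have llong : (2 ≤ W1.length ∧ 2 ≤ W2.length) ∨ (2 ≤ W1.length ∧ 2 ≤ W3.length) ∨
        (2 ≤ W2.length ∧ 2 ≤ W3.length) := by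
      rcases Nat.eq_zero_or_pos i0 with h0 | h0
      · right; right; constructor <;> omega
      · right; left; constructor <;> omega
    have m12 : ∀ y, y ∈ W1.support → y ∈ W2.support → y = u := by
      intro y hy1 hy2
      rw [sW1] at hy1; rw [sW2] at hy2
      rcases hy1 with hy1 | hyv
      · rcases hy2 with hy2 | hyv
        · exact mem_take_drop P hu hPp hy1 hy2
        · rw [hyv] at hy1; exact absurd (hAsub _ hy1) hv2nP
      · rcases hy2 with hy2 | hyv2
        · rw [hyv] at hy2; exact absurd (hrestsub _ hy2) hv1nP
        · rw [hyv] at hyv2; exact absurd hyv2 hv12.ne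
    have m13 : ∀ y, y ∈ W1.support → y ∈ W3.support → y = u := by
      intro y hy1 hy3
      rw [sW1] at hy1; rw [sW3] at hy3
      rcases hy3 with hyu | hy3
      · exact hyu
      · rcases hy1 with hy1 | hyv
        · exact absurd (hAsub _ hy1) (hdisj _ hy3)
        · rw [hyv] at hy3; exact absurd hy3 hv1nR
    have m23 : ∀ y, y ∈ W2.support → y ∈ W3.support → y = u := by
      intro y hy2 hy3
      rw [sW2] at hy2; rw [sW3] at hy3
      rcases hy3 with hyu | hy3
      · exact hyu
      · rcases hy2 with hy2 | hyv
        · exact absurd (hrestsub _ hy2) (hdisj _ hy3)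
        · rw [hyv] at hy3; exact absurd hy3 hv2nR
    have chW1 : Chordless W1 := by
      rw [hW1def]
      refine chordless_concat (chordless_reverse (chordless_takeUntil hPp hPch hu))
        hv1a1.symm ?_
      intro y hy hadj
      rw [Walk.support_reverse, List.mem_reverse] at hy
      exact hv1P y (hAsub y hy) hadj
    have chW2 : Chordless W2 := by
      rw [hW2def]
      exact chordless_concat (chordless_dropUntil hPp hPch hu) hv2a2.symm
        (fun y hy hadj => hv2P y (hrestsub y hy) hadj)
    have chW3 : Chordless W3 := by
      rw [hW3def]
      refine chordless_cons hRch hxu' ?_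
      intro y hy hadj
      by_contra hne
      exact hRP y hy hne u hu hadj.symm
    have cr12 : ∀ y z, y ∈ W1.support → z ∈ W2.support → G.Adj y z →
        s(y, z) ∈ W1.edges ∨ s(y, z) ∈ W2.edges ∨ (y = v1 ∧ z = v2) := by
      intro y z hy hz hadj
      rw [sW1] at hy; rw [sW2] at hz
      rcases hy with hy | hyv
      · rcases hz with hz | hzv
        · have he := hPch y z (hAsub y hy) (hrestsub z hz) hadj
          rcases splitE he with h | h
          · exact Or.inl (eW1A _ h)
          · exact Or.inr (Or.inl (eW2rest _ h))
        · rw [hzv] at hadj ⊢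
          have hya : y = a2 := hv2P y (hAsub y hy) hadj.symm
          rw [hya]
          exact Or.inr (Or.inl eW2v)
      · rcases hz with hz | hzv
        · rw [hyv] at hadj ⊢
          have hza : z = a1 := hv1P z (hrestsub z hz) hadj
          rw [hza]
          refine Or.inl ?_
          rw [Sym2.eq_swap]
          exact eW1v
        · exact Or.inr (Or.inr ⟨hyv, hzv⟩)
    have cr13 : ∀ y z, y ∈ W1.support → z ∈ W3.support → G.Adj y z →
        s(y, z) ∈ W1.edges ∨ s(y, z) ∈ W3.edges ∨ (y = v1 ∧ z = v3) := by
      intro y z hy hz hadj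
      rw [sW1] at hy; rw [sW3] at hz
      rcases hz with hzu | hz
      · rw [hzu] at hadj ⊢
        rcases hy with hy | hyv
        · exact Or.inl (eW1A _ (edgeA hy A.end_mem_support hadj))
        · rw [hyv] at hadj ⊢
          have hua : u = a1 := hv1P u hu hadj
          refine Or.inl ?_
          have h' : s(v1, u) = s(a1, v1) := by rw [hua]; exact Sym2.eq_swap
          rw [h']
          exact eW1v
      · rcases hy with hy | hyv
        · by_cases hzx : z = x
          · rw [hzx] at hadj ⊢
            have hyu : y = u := nA y hy hadj.symm
            rw [hyu]
            exact Or.inr (Or.inl eW3x)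
          · exact absurd hadj.symm (hRP z hz hzx y (hAsub y hy))
        · by_cases hzv : z = v3
          · exact Or.inr (Or.inr ⟨hyv, hzv⟩)
          · rw [hyv] at hadj; exact absurd hadj (hv1R z hz hzv)
    have cr23 : ∀ y z, y ∈ W2.support → z ∈ W3.support → G.Adj y z →
        s(y, z) ∈ W2.edges ∨ s(y, z) ∈ W3.edges ∨ (y = v2 ∧ z = v3) := by
      intro y z hy hz hadj
      rw [sW2] at hy; rw [sW3] at hz
      rcases hz with hzu | hz
      · rw [hzu] at hadj ⊢
        rcases hy with hy | hyv
        · exact Or.inl (eW2rest _ (edgerest hy rest.start_mem_support hadj))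
        · rw [hyv] at hadj ⊢
          have hua : u = a2 := hv2P u hu hadj
          refine Or.inl ?_
          have h' : s(v2, u) = s(a2, v2) := by rw [hua]; exact Sym2.eq_swap
          rw [h']
          exact eW2v
      · rcases hy with hy | hyv
        · by_cases hzx : z = x
          · rw [hzx] at hadj ⊢
            have hyu : y = u := nrest y hy hadj.symm
            rw [hyu]
            exact Or.inr (Or.inl eW3x)
          · exact absurd hadj.symm (hRP z hz hzx y (hrestsub y hy))
        · by_cases hzv : z = v3
          · exact Or.inr (Or.inr ⟨hyv, hzv⟩)
          · rw [hyv] at hadj; exact absurd hadj (hv2R z hz hzv)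
    exact absurd (pyramid_of_walks W1 W2 W3 hW1p hW2p hW3p (by omega) (by omega) (by omega)
      llong m12 m13 m23 hv12 hv23 hv13 chW1 chW2 chW3 cr12 cr13 cr23) (hpyr _)


lemma walk_first_hit {Cs Ps : Set V} : ∀ {c d : V} (wlk : G.Walk c d),
    (∀ v ∈ wlk.support, v ∈ Cs) → c ∉ Ps → d ∈ Ps →
    ∃ z, z ∈ Cs ∧ z ∉ Ps ∧ (∃ y ∈ Ps, G.Adj z y) ∧
      ∃ q : G.Walk c z, ∀ v ∈ q.support, v ∈ Cs ∧ v ∉ Ps := by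
  intro c d wlk
  induction wlk with
  | nil =>
    intro hs hc hd
    exact absurd hd hc
  | @cons c e d h w ih =>
    intro hs hc hd
    by_cases he : e ∈ Ps
    · refine ⟨c, hs c (by simp), hc, ⟨e, he, h⟩, Walk.nil, ?_⟩
      intro v hv
      rw [Walk.support_nil, List.mem_singleton] at hv
      rw [hv]
      exact ⟨hs c (by simp), hc⟩
    · obtain ⟨z, hz1, hz2, hz3, q, hq⟩ := ih (fun v hv => hs v (by simp [hv])) he hd
      refine ⟨z, hz1, hz2, hz3, Walk.cons h q, ?_⟩
      intro v hv
      rw [Walk.support_cons, List.mem_cons] at hv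
      rcases hv with hvc | hv
      · rw [hvc]; exact ⟨hs c (by simp), hc⟩
      · exact hq v hv

end StmtAux

/-- Step 2 of the long-prism detection algorithm: in a pyramid-free graph, an
induced net plus a component of `G − (N(v₁) ∪ N(v₂) ∪ N(v₃))` containing neighbors
of `a₁`, `a₂`, and `a₃` yields an induced long prism. -/
theorem stmt19 {V : Type u} [Fintype V] (G : SimpleGraph V)
    (hpyr : ∀ T : Set V, ¬ IsPyramid (G.induce T))
    (a₁ a₂ a₃ v₁ v₂ v₃ : V)
    (hnodup : [a₁, a₂, a₃, v₁, v₂, v₃].Nodup)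
    (hadj : ∀ x ∈ [a₁, a₂, a₃, v₁, v₂, v₃], ∀ y ∈ [a₁, a₂, a₃, v₁, v₂, v₃],
      (G.Adj x y ↔ s(x, y) ∈ ({s(v₁, v₂), s(v₂, v₃), s(v₃, v₁),
        s(a₁, v₁), s(a₂, v₂), s(a₃, v₃)} : Set (Sym2 V))))
    (C : Set V)
    (hCav : ∀ u ∈ C, ¬ G.Adj v₁ u ∧ ¬ G.Adj v₂ u ∧ ¬ G.Adj v₃ u)
    (hCconn : (G.induce C).Connected)
    (hCmax : ∀ u ∈ C, ∀ w : V, w ∉ C →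
      (¬ G.Adj v₁ w ∧ ¬ G.Adj v₂ w ∧ ¬ G.Adj v₃ w) → ¬ G.Adj u w)
    (h1 : ∃ u ∈ C, G.Adj a₁ u) (h2 : ∃ u ∈ C, G.Adj a₂ u)
    (h3 : ∃ u ∈ C, G.Adj a₃ u) :
    ∃ T : Set V, IsLongPrism (G.induce T) := by
  classical
  -- distinctness facts
  have hnd := hnodup
  simp only [List.nodup_cons, List.mem_cons, List.mem_singleton, List.not_mem_nil,
    or_false, List.nodup_nil, and_true, not_or] at hnd
  obtain ⟨⟨ne12, ne13, ne14, ne15, ne16⟩, ⟨ne23, ne24, ne25, ne26⟩,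
    ⟨ne34, ne35, ne36⟩, ⟨ne45, ne46⟩, ne56, -⟩ := hnd
  have hmem : ∀ t ∈ [a₁, a₂, a₃, v₁, v₂, v₃], t ∈ [a₁, a₂, a₃, v₁, v₂, v₃] := fun t ht => ht
  -- positive adjacencies
  have av1 : G.Adj a₁ v₁ := (hadj a₁ (by simp) v₁ (by simp)).mpr (by simp)
  have av2 : G.Adj a₂ v₂ := (hadj a₂ (by simp) v₂ (by simp)).mpr (by simp)
  have av3 : G.Adj a₃ v₃ := (hadj a₃ (by simp) v₃ (by simp)).mpr (by simp)
  have hv12 : G.Adj v₁ v₂ := (hadj v₁ (by simp) v₂ (by simp)).mpr (by simp)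
  have hv23 : G.Adj v₂ v₃ := (hadj v₂ (by simp) v₃ (by simp)).mpr (by simp)
  have hv13 : G.Adj v₁ v₃ := (hadj v₁ (by simp) v₃ (by simp)).mpr (by
    rw [Sym2.eq_swap]; simp)
  -- negative adjacencies
  have neg : ∀ p ∈ [a₁, a₂, a₃, v₁, v₂, v₃], ∀ q ∈ [a₁, a₂, a₃, v₁, v₂, v₃],
      G.Adj p q → s(p, q) ∈ ({s(v₁, v₂), s(v₂, v₃), s(v₃, v₁),
        s(a₁, v₁), s(a₂, v₂), s(a₃, v₃)} : Set (Sym2 V)) :=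
    fun p hp q hq h => (hadj p hp q hq).mp h
  have hn12 : ¬ G.Adj a₁ a₂ := by
    intro h
    have h' := neg a₁ (by simp) a₂ (by simp) h
    simp only [Set.mem_insert_iff, Set.mem_singleton_iff, Sym2.eq_iff] at h'
    rcases h' with (⟨e1, e2⟩|⟨e1, e2⟩)|(⟨e1, e2⟩|⟨e1, e2⟩)|(⟨e1, e2⟩|⟨e1, e2⟩)|
      (⟨e1, e2⟩|⟨e1, e2⟩)|(⟨e1, e2⟩|⟨e1, e2⟩)|(⟨e1, e2⟩|⟨e1, e2⟩) <;> subst_vars <;>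
      first
      | exact ne12 rfl | exact ne13 rfl | exact ne14 rfl | exact ne15 rfl | exact ne16 rfl
      | exact ne23 rfl | exact ne24 rfl | exact ne25 rfl | exact ne26 rfl | exact ne34 rfl
      | exact ne35 rfl | exact ne36 rfl | exact ne45 rfl | exact ne46 rfl | exact ne56 rfl
  have hn31 : ¬ G.Adj a₃ a₁ := by
    intro h
    have h' := neg a₃ (by simp) a₁ (by simp) h
    simp only [Set.mem_insert_iff, Set.mem_singleton_iff, Sym2.eq_iff] at h'
    rcases h' with (⟨e1, e2⟩|⟨e1, e2⟩)|(⟨e1, e2⟩|⟨e1, e2⟩)|(⟨e1, e2⟩|⟨e1, e2⟩)|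
      (⟨e1, e2⟩|⟨e1, e2⟩)|(⟨e1, e2⟩|⟨e1, e2⟩)|(⟨e1, e2⟩|⟨e1, e2⟩) <;> subst_vars <;>
      first
      | exact ne12 rfl | exact ne13 rfl | exact ne14 rfl | exact ne15 rfl | exact ne16 rfl
      | exact ne23 rfl | exact ne24 rfl | exact ne25 rfl | exact ne26 rfl | exact ne34 rfl
      | exact ne35 rfl | exact ne36 rfl | exact ne45 rfl | exact ne46 rfl | exact ne56 rfl
  have hn32 : ¬ G.Adj a₃ a₂ := by
    intro h
    have h' := neg a₃ (by simp) a₂ (by simp) h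
    simp only [Set.mem_insert_iff, Set.mem_singleton_iff, Sym2.eq_iff] at h'
    rcases h' with (⟨e1, e2⟩|⟨e1, e2⟩)|(⟨e1, e2⟩|⟨e1, e2⟩)|(⟨e1, e2⟩|⟨e1, e2⟩)|
      (⟨e1, e2⟩|⟨e1, e2⟩)|(⟨e1, e2⟩|⟨e1, e2⟩)|(⟨e1, e2⟩|⟨e1, e2⟩) <;> subst_vars <;>
      first
      | exact ne12 rfl | exact ne13 rfl | exact ne14 rfl | exact ne15 rfl | exact ne16 rfl
      | exact ne23 rfl | exact ne24 rfl | exact ne25 rfl | exact ne26 rfl | exact ne34 rfl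
      | exact ne35 rfl | exact ne36 rfl | exact ne45 rfl | exact ne46 rfl | exact ne56 rfl
  have hnv1a2 : ¬ G.Adj v₁ a₂ := by
    intro h
    have h' := neg v₁ (by simp) a₂ (by simp) h
    simp only [Set.mem_insert_iff, Set.mem_singleton_iff, Sym2.eq_iff] at h'
    rcases h' with (⟨e1, e2⟩|⟨e1, e2⟩)|(⟨e1, e2⟩|⟨e1, e2⟩)|(⟨e1, e2⟩|⟨e1, e2⟩)|
      (⟨e1, e2⟩|⟨e1, e2⟩)|(⟨e1, e2⟩|⟨e1, e2⟩)|(⟨e1, e2⟩|⟨e1, e2⟩) <;> subst_vars <;>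
      first
      | exact ne12 rfl | exact ne13 rfl | exact ne14 rfl | exact ne15 rfl | exact ne16 rfl
      | exact ne23 rfl | exact ne24 rfl | exact ne25 rfl | exact ne26 rfl | exact ne34 rfl
      | exact ne35 rfl | exact ne36 rfl | exact ne45 rfl | exact ne46 rfl | exact ne56 rfl
  have hnv1a3 : ¬ G.Adj v₁ a₃ := by
    intro h
    have h' := neg v₁ (by simp) a₃ (by simp) h
    simp only [Set.mem_insert_iff, Set.mem_singleton_iff, Sym2.eq_iff] at h'
    rcases h' with (⟨e1, e2⟩|⟨e1, e2⟩)|(⟨e1, e2⟩|⟨e1, e2⟩)|(⟨e1, e2⟩|⟨e1, e2⟩)|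
      (⟨e1, e2⟩|⟨e1, e2⟩)|(⟨e1, e2⟩|⟨e1, e2⟩)|(⟨e1, e2⟩|⟨e1, e2⟩) <;> subst_vars <;>
      first
      | exact ne12 rfl | exact ne13 rfl | exact ne14 rfl | exact ne15 rfl | exact ne16 rfl
      | exact ne23 rfl | exact ne24 rfl | exact ne25 rfl | exact ne26 rfl | exact ne34 rfl
      | exact ne35 rfl | exact ne36 rfl | exact ne45 rfl | exact ne46 rfl | exact ne56 rfl
  have hnv2a1 : ¬ G.Adj v₂ a₁ := by
    intro h
    have h' := neg v₂ (by simp) a₁ (by simp) h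
    simp only [Set.mem_insert_iff, Set.mem_singleton_iff, Sym2.eq_iff] at h'
    rcases h' with (⟨e1, e2⟩|⟨e1, e2⟩)|(⟨e1, e2⟩|⟨e1, e2⟩)|(⟨e1, e2⟩|⟨e1, e2⟩)|
      (⟨e1, e2⟩|⟨e1, e2⟩)|(⟨e1, e2⟩|⟨e1, e2⟩)|(⟨e1, e2⟩|⟨e1, e2⟩) <;> subst_vars <;>
      first
      | exact ne12 rfl | exact ne13 rfl | exact ne14 rfl | exact ne15 rfl | exact ne16 rfl
      | exact ne23 rfl | exact ne24 rfl | exact ne25 rfl | exact ne26 rfl | exact ne34 rfl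
      | exact ne35 rfl | exact ne36 rfl | exact ne45 rfl | exact ne46 rfl | exact ne56 rfl
  have hnv2a3 : ¬ G.Adj v₂ a₃ := by
    intro h
    have h' := neg v₂ (by simp) a₃ (by simp) h
    simp only [Set.mem_insert_iff, Set.mem_singleton_iff, Sym2.eq_iff] at h'
    rcases h' with (⟨e1, e2⟩|⟨e1, e2⟩)|(⟨e1, e2⟩|⟨e1, e2⟩)|(⟨e1, e2⟩|⟨e1, e2⟩)|
      (⟨e1, e2⟩|⟨e1, e2⟩)|(⟨e1, e2⟩|⟨e1, e2⟩)|(⟨e1, e2⟩|⟨e1, e2⟩) <;> subst_vars <;>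
      first
      | exact ne12 rfl | exact ne13 rfl | exact ne14 rfl | exact ne15 rfl | exact ne16 rfl
      | exact ne23 rfl | exact ne24 rfl | exact ne25 rfl | exact ne26 rfl | exact ne34 rfl
      | exact ne35 rfl | exact ne36 rfl | exact ne45 rfl | exact ne46 rfl | exact ne56 rfl
  have hnv3a1 : ¬ G.Adj v₃ a₁ := by
    intro h
    have h' := neg v₃ (by simp) a₁ (by simp) h
    simp only [Set.mem_insert_iff, Set.mem_singleton_iff, Sym2.eq_iff] at h'
    rcases h' with (⟨e1, e2⟩|⟨e1, e2⟩)|(⟨e1, e2⟩|⟨e1, e2⟩)|(⟨e1, e2⟩|⟨e1, e2⟩)|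
      (⟨e1, e2⟩|⟨e1, e2⟩)|(⟨e1, e2⟩|⟨e1, e2⟩)|(⟨e1, e2⟩|⟨e1, e2⟩) <;> subst_vars <;>
      first
      | exact ne12 rfl | exact ne13 rfl | exact ne14 rfl | exact ne15 rfl | exact ne16 rfl
      | exact ne23 rfl | exact ne24 rfl | exact ne25 rfl | exact ne26 rfl | exact ne34 rfl
      | exact ne35 rfl | exact ne36 rfl | exact ne45 rfl | exact ne46 rfl | exact ne56 rfl
  have hnv3a2 : ¬ G.Adj v₃ a₂ := by
    intro h
    have h' := neg v₃ (by simp) a₂ (by simp) h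
    simp only [Set.mem_insert_iff, Set.mem_singleton_iff, Sym2.eq_iff] at h'
    rcases h' with (⟨e1, e2⟩|⟨e1, e2⟩)|(⟨e1, e2⟩|⟨e1, e2⟩)|(⟨e1, e2⟩|⟨e1, e2⟩)|
      (⟨e1, e2⟩|⟨e1, e2⟩)|(⟨e1, e2⟩|⟨e1, e2⟩)|(⟨e1, e2⟩|⟨e1, e2⟩) <;> subst_vars <;>
      first
      | exact ne12 rfl | exact ne13 rfl | exact ne14 rfl | exact ne15 rfl | exact ne16 rfl
      | exact ne23 rfl | exact ne24 rfl | exact ne25 rfl | exact ne26 rfl | exact ne34 rfl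
      | exact ne35 rfl | exact ne36 rfl | exact ne45 rfl | exact ne46 rfl | exact ne56 rfl
  -- not in C
  have hv1C : v₁ ∉ C := fun h => (hCav v₁ h).2.1 hv12.symm
  have hv2C : v₂ ∉ C := fun h => (hCav v₂ h).1 hv12
  have hv3C : v₃ ∉ C := fun h => (hCav v₃ h).1 hv13
  have ha1C : a₁ ∉ C := fun h => (hCav a₁ h).1 av1.symm
  have ha2C : a₂ ∉ C := fun h => (hCav a₂ h).2.1 av2.symm
  have ha3C : a₃ ∉ C := fun h => (hCav a₃ h).2.2 av3.symm
  -- walks within C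
  have getCwalk : ∀ (p q : V) (hp : p ∈ C) (hq : q ∈ C),
      ∃ wlk : G.Walk p q, ∀ v ∈ wlk.support, v ∈ C := by
    intro p q hp hq
    obtain ⟨w0⟩ := hCconn.preconnected ⟨p, hp⟩ ⟨q, hq⟩
    refine ⟨w0.map (Embedding.induce C).toHom, ?_⟩
    intro v hv
    obtain ⟨y, _, rfl⟩ := List.mem_map.mp (Eq.mp (congrArg (v ∈ ·) (Walk.support_map (Embedding.induce C).toHom w0)) hv)
    exact y.2
  obtain ⟨c1, hc1C, hc1a⟩ := h1
  obtain ⟨c2, hc2C, hc2a⟩ := h2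
  obtain ⟨c3, hc3C, hc3a⟩ := h3
  set Ssur : Set V := insert a₁ (insert a₂ C) with hSsur
  have hexP : ∃ p : G.Walk a₁ a₂, ∀ v ∈ p.support, v ∈ Ssur := by
    obtain ⟨w12, hw12⟩ := getCwalk c1 c2 hc1C hc2C
    refine ⟨Walk.cons hc1a (w12.concat hc2a.symm), ?_⟩
    intro v hv
    rw [Walk.support_cons, List.mem_cons] at hv
    rcases hv with hva | hv
    · rw [hva]; exact Set.mem_insert _ _
    · rw [StmtAux.mem_support_concat] at hv
      rcases hv with hv | hva
      · exact Set.mem_insert_of_mem _ (Set.mem_insert_of_mem _ (hw12 v hv))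
      · rw [hva]; exact Set.mem_insert_of_mem _ (Set.mem_insert _ _)
  obtain ⟨P, hPS, hPp, hPch, hPmin⟩ := StmtAux.exists_min_path Ssur hexP
  have hPmem : ∀ y ∈ P.support, y = a₁ ∨ y = a₂ ∨ y ∈ C := by
    intro y hy
    have := hPS y hy
    rw [hSsur, Set.mem_insert_iff, Set.mem_insert_iff] at this
    exact this
  have hPlen : 2 ≤ P.length := by
    by_contra hlen
    have h0 : P.length = 0 ∨ P.length = 1 := by omega
    rcases h0 with h0 | h0
    · exact ne12 (Walk.eq_of_length_eq_zero h0)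
    · exact hn12 (Walk.adj_of_length_eq_one h0)
  have hv1nP : v₁ ∉ P.support := by
    intro h
    rcases hPmem v₁ h with e | e | e
    · exact ne14 e.symm
    · exact ne24 e.symm
    · exact hv1C e
  have hv2nP : v₂ ∉ P.support := by
    intro h
    rcases hPmem v₂ h with e | e | e
    · exact ne15 e.symm
    · exact ne25 e.symm
    · exact hv2C e
  have hv3nP : v₃ ∉ P.support := by
    intro h
    rcases hPmem v₃ h with e | e | e
    · exact ne16 e.symm
    · exact ne26 e.symm
    · exact hv3C e
  have ha3nP : a₃ ∉ P.support := by
    intro h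
    rcases hPmem a₃ h with e | e | e
    · exact ne13 e.symm
    · exact ne23 e.symm
    · exact ha3C e
  have hv1P : ∀ z ∈ P.support, G.Adj v₁ z → z = a₁ := by
    intro z hz hadjz
    rcases hPmem z hz with e | e | e
    · exact e
    · rw [e] at hadjz; exact absurd hadjz hnv1a2
    · exact absurd hadjz ((hCav z e).1)
  have hv2P : ∀ z ∈ P.support, G.Adj v₂ z → z = a₂ := by
    intro z hz hadjz
    rcases hPmem z hz with e | e | e
    · rw [e] at hadjz; exact absurd hadjz hnv2a1
    · exact e
    · exact absurd hadjz ((hCav z e).2.1)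
  have hv3Pn : ∀ z ∈ P.support, ¬ G.Adj v₃ z := by
    intro z hz hadjz
    rcases hPmem z hz with e | e | e
    · rw [e] at hadjz; exact hnv3a1 hadjz
    · rw [e] at hadjz; exact hnv3a2 hadjz
    · exact (hCav z e).2.2 hadjz
  by_cases hcase : ∃ z ∈ P.support, G.Adj a₃ z
  · -- Case 1: a₃ has a neighbour on P; R is the single edge a₃ - v₃
    set R : G.Walk a₃ v₃ := Walk.cons av3 Walk.nil with hRdef
    have sR : ∀ y, y ∈ R.support ↔ (y = a₃ ∨ y = v₃) := by
      intro y
      rw [hRdef, Walk.support_cons, Walk.support_nil, List.mem_cons, List.mem_singleton]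
    have hRp : R.IsPath := by
      rw [hRdef, Walk.cons_isPath_iff]
      refine ⟨Walk.IsPath.nil, ?_⟩
      rw [Walk.support_nil, List.mem_singleton]
      exact ne36
    have hRch : StmtAux.Chordless R := by
      intro y z hy hz hadjz
      rw [sR] at hy hz
      have he : s(a₃, v₃) ∈ R.edges := by rw [hRdef, Walk.edges_cons]; simp
      rcases hy with hy | hy <;> rcases hz with hz | hz
      · rw [hy, hz] at hadjz; exact absurd hadjz (G.loopless.irrefl _)
      · rw [hy, hz]; exact he
      · rw [hy, hz]; rw [Sym2.eq_swap]; exact he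
      · rw [hy, hz] at hadjz; exact absurd hadjz (G.loopless.irrefl _)
    have hdisj : ∀ y ∈ R.support, y ∉ P.support := by
      intro y hy
      rw [sR] at hy
      rcases hy with hy | hy
      · rw [hy]; exact ha3nP
      · rw [hy]; exact hv3nP
    have hRP : ∀ y ∈ R.support, y ≠ a₃ → ∀ z ∈ P.support, ¬ G.Adj y z := by
      intro y hy hyne z hz
      rw [sR] at hy
      rcases hy with hy | hy
      · exact absurd hy hyne
      · rw [hy]; exact hv3Pn z hz
    have hv1R : ∀ y ∈ R.support, y ≠ v₃ → ¬ G.Adj v₁ y := by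
      intro y hy hyne
      rw [sR] at hy
      rcases hy with hy | hy
      · rw [hy]; exact hnv1a3
      · exact absurd hy hyne
    have hv2R : ∀ y ∈ R.support, y ≠ v₃ → ¬ G.Adj v₂ y := by
      intro y hy hyne
      rw [sR] at hy
      rcases hy with hy | hy
      · rw [hy]; exact hnv2a3
      · exact absurd hy hyne
    have hv1nR : v₁ ∉ R.support := by
      rw [sR]
      rintro (h | h)
      · exact ne34 h.symm
      · exact ne46 h
    have hv2nR : v₂ ∉ R.support := by
      rw [sR]
      rintro (h | h)
      · exact ne35 h.symm
      · exact ne56 h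
    exact StmtAux.crux hpyr P hPp hPch hPlen R hRp hRch (by rw [hRdef]; simp) hdisj hRP
      hcase hv1P av1.symm hv2P av2.symm hv1R hv2R hv12 hv13 hv23 hv1nP hv2nP hv1nR hv2nR
      (Or.inr ⟨hn31, hn32⟩)
  · -- Case 2: connect a₃ through C to an attachment of P
    push_neg at hcase
    have hc3P : c3 ∉ P.support := fun h => hcase c3 h hc3a
    have hp1mem : P.getVert 1 ∈ P.support := StmtAux.getVert_mem_support P (by omega)
    have hp1 : P.getVert 1 ∈ C := by
      rcases hPmem _ hp1mem with e | e | e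
      · exfalso
        have h1 : (1 : ℕ) = 0 :=
          StmtAux.getVert_inj hPp (by omega) (by omega) (by rw [e, P.getVert_zero])
        omega
      · exfalso
        have h1 : (1 : ℕ) = P.length :=
          StmtAux.getVert_inj hPp (by omega) (le_refl _) (by rw [e, P.getVert_length])
        omega
      · exact e
    obtain ⟨wcp, hwcp⟩ := getCwalk c3 (P.getVert 1) hc3C hp1
    obtain ⟨z0, hz0C, hz0P, hz0adj, q0, hq0⟩ :=
      StmtAux.walk_first_hit (Ps := {v | v ∈ P.support}) wcp hwcp hc3P hp1mem
    set S2 : Set V := insert a₃ {v | v ∈ C ∧ v ∉ P.support} with hS2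
    have hPn : ∃ n, ∃ z, (z ∈ C ∧ z ∉ P.support ∧ ∃ y ∈ P.support, G.Adj z y) ∧
        ∃ q : G.Walk a₃ z, q.length = n ∧ ∀ v ∈ q.support, v ∈ S2 := by
      obtain ⟨y0, hy0, hy0adj⟩ := hz0adj
      refine ⟨_, z0, ⟨hz0C, hz0P, ⟨y0, hy0, hy0adj⟩⟩, Walk.cons hc3a q0, rfl, ?_⟩
      intro v hv
      rw [Walk.support_cons, List.mem_cons] at hv
      rcases hv with hva | hv
      · rw [hva]; exact Set.mem_insert _ _
      · exact Set.mem_insert_of_mem _ (hq0 v hv)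
    obtain ⟨z, ⟨hzC, hzP, y0, hy0, hzadj⟩, q1, hq1len, hq1S⟩ := Nat.find_spec hPn
    obtain ⟨Q, hQS, hQp, hQch, hQmin⟩ := StmtAux.exists_min_path S2 ⟨q1, hq1S⟩
    have hQlen : Q.length = Nat.find hPn := by
      have h2 : Nat.find hPn ≤ Q.length :=
        Nat.find_min' hPn ⟨z, ⟨hzC, hzP, y0, hy0, hzadj⟩, Q, rfl, hQS⟩
      have h1 : Q.length ≤ Nat.find hPn := hq1len ▸ hQmin q1 hq1S
      omega
    have hQmem : ∀ y ∈ Q.support, y = a₃ ∨ (y ∈ C ∧ y ∉ P.support) := by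
      intro y hy
      have := hQS y hy
      rw [hS2, Set.mem_insert_iff] at this
      exact this
    have hQint : ∀ y ∈ Q.support, y ≠ z → ∀ t ∈ P.support, ¬ G.Adj y t := by
      intro y hy hyz t ht hadjz
      rcases hQmem y hy with hya | ⟨hyC, hyP⟩
      · rw [hya] at hadjz; exact hcase t ht hadjz
      · have hylen : (Q.takeUntil y hy).length < Q.length := by
          have hle := Q.length_takeUntil_le hy
          rcases Nat.lt_or_ge (Q.takeUntil y hy).length Q.length with hcs | hcs
          · exact hcs
          · exfalso
            have heq : (Q.takeUntil y hy).length = Q.length := by omega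
            have h1 := StmtAux.getVert_take_length Q hy
            rw [heq, Q.getVert_length] at h1
            exact hyz h1.symm
        have hfind : Nat.find hPn ≤ (Q.takeUntil y hy).length :=
          Nat.find_min' hPn ⟨y, ⟨hyC, hyP, ⟨t, ht, hadjz⟩⟩, Q.takeUntil y hy, rfl,
            fun v hv => hQS v (Q.support_takeUntil_subset hy hv)⟩
        omega
    have hza3 : z ≠ a₃ := fun h => ha3C (h ▸ hzC)
    have hQpos : 1 ≤ Q.length := by
      by_contra h0
      have h1 : Q.length = 0 := by omega
      exact hza3 (Walk.eq_of_length_eq_zero h1).symm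
    set R : G.Walk z v₃ := Q.reverse.concat av3 with hRdef
    have sR : ∀ y, y ∈ R.support ↔ (y ∈ Q.support ∨ y = v₃) := by
      intro y
      rw [hRdef, StmtAux.mem_support_concat, Walk.support_reverse, List.mem_reverse]
    have hv3nQ : v₃ ∉ Q.support := by
      intro h
      rcases hQmem v₃ h with e | ⟨e, _⟩
      · exact ne36 e.symm
      · exact hv3C e
    have hRp : R.IsPath := by
      rw [hRdef]
      refine StmtAux.isPath_concat hQp.reverse av3 ?_
      rw [Walk.support_reverse, List.mem_reverse]
      exact hv3nQ
    have hRch : StmtAux.Chordless R := by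
      rw [hRdef]
      refine StmtAux.chordless_concat (StmtAux.chordless_reverse hQch) av3 ?_
      intro y hy hadjz
      rw [Walk.support_reverse, List.mem_reverse] at hy
      rcases hQmem y hy with e | ⟨e, _⟩
      · exact e
      · exact absurd hadjz ((hCav y e).2.2)
    have hRlen : 1 ≤ R.length := by
      rw [hRdef, Walk.length_concat]
      omega
    have hdisj : ∀ y ∈ R.support, y ∉ P.support := by
      intro y hy
      rw [sR] at hy
      rcases hy with hy | hy
      · rcases hQmem y hy with e | ⟨_, e⟩
        · rw [e]; exact ha3nP
        · exact e
      · rw [hy]; exact hv3nP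
    have hRP : ∀ y ∈ R.support, y ≠ z → ∀ t ∈ P.support, ¬ G.Adj y t := by
      intro y hy hyz t ht
      rw [sR] at hy
      rcases hy with hy | hy
      · exact hQint y hy hyz t ht
      · rw [hy]; exact hv3Pn t ht
    have hxnbr : ∃ t ∈ P.support, G.Adj z t := ⟨y0, hy0, hzadj⟩
    have hv1R : ∀ y ∈ R.support, y ≠ v₃ → ¬ G.Adj v₁ y := by
      intro y hy hyne
      rw [sR] at hy
      rcases hy with hy | hy
      · rcases hQmem y hy with e | ⟨e, _⟩
        · rw [e]; exact hnv1a3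
        · exact (hCav y e).1
      · exact absurd hy hyne
    have hv2R : ∀ y ∈ R.support, y ≠ v₃ → ¬ G.Adj v₂ y := by
      intro y hy hyne
      rw [sR] at hy
      rcases hy with hy | hy
      · rcases hQmem y hy with e | ⟨e, _⟩
        · rw [e]; exact hnv2a3
        · exact (hCav y e).2.1
      · exact absurd hy hyne
    have hv1nR : v₁ ∉ R.support := by
      rw [sR]
      rintro (h | h)
      · rcases hQmem v₁ h with e | ⟨e, _⟩
        · exact ne34 e.symm
        · exact hv1C e
      · exact ne46 h
    have hv2nR : v₂ ∉ R.support := by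
      rw [sR]
      rintro (h | h)
      · rcases hQmem v₂ h with e | ⟨e, _⟩
        · exact ne35 e.symm
        · exact hv2C e
      · exact ne56 h
    exact StmtAux.crux hpyr P hPp hPch hPlen R hRp hRch hRlen hdisj hRP
      hxnbr hv1P av1.symm hv2P av2.symm hv1R hv2R hv12 hv13 hv23 hv1nP hv2nP hv1nR hv2nR
      (Or.inl (by rw [hRdef, Walk.length_concat, Walk.length_reverse]; omega))
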